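/- arXiv:0905.0989 — 5 statements merged into one kernel-verified Lean document; each statement's English description precedes it below -/
import Mathlib

section
/- Let (E, 𝔈) be a measurable space, let P₀ and P_ν be probability measures on (E, 𝔈) with P_ν absolutely continuous with respect to P₀, and let L_ν = dP_ν/dP₀ be the Radon–Nikodym derivative, assumed square-integrable with respect to P₀. Then for every α ∈ (0,1) and every measurable set A ⊆ E with P₀(A) ≤ α, one has P_ν(E ∖ A) ≥ 1 − α − (1/2)·(∫_E L_ν² dP₀ − 1)^{1/2}. -/
open MeasureTheory

/-- The mixture lower-bound lemma (Lemma 2 of Fromont–Laurent–Reynaud-Bouret): if `P_ν ≪ P₀`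
with square-integrable likelihood ratio `L_ν = dP_ν/dP₀`, then for any measurable set `A` with
`P₀(A) ≤ α`, `P_ν(Aᶜ) ≥ 1 - α - (1/2)(∫ L_ν² dP₀ - 1)^{1/2}`. -/
theorem mixture_second_kind_lower_bound {E : Type*} [MeasurableSpace E]
    (P₀ Pν : Measure E) [IsProbabilityMeasure P₀] [IsProbabilityMeasure Pν]
    (hac : Pν ≪ P₀)
    (hL2 : MemLp (fun x => (Pν.rnDeriv P₀ x).toReal) 2 P₀)
    (α : ℝ) (hα : α ∈ Set.Ioo (0 : ℝ) 1)
    (A : Set E) (hA : MeasurableSet A) (hPA : P₀ A ≤ ENNReal.ofReal α) :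
    (Pν Aᶜ).toReal ≥
      1 - α - (1 / 2) * Real.sqrt ((∫ x, ((Pν.rnDeriv P₀ x).toReal) ^ 2 ∂P₀) - 1) := by
  set L : E → ℝ := fun x => (Pν.rnDeriv P₀ x).toReal with hLdef
  have hL1 : Integrable L P₀ := hL2.integrable (by norm_num)
  have hintL : ∫ x, L x ∂P₀ = 1 := by
    rw [Measure.integral_toReal_rnDeriv hac]; simp
  -- f = L - 1
  set f : E → ℝ := fun x => L x - 1 with hfdef
  have hf2 : MemLp f 2 P₀ := hL2.sub (memLp_const 1)
  have hf1 : Integrable f P₀ := hL1.sub (integrable_const 1)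
  have hintf : ∫ x, f x ∂P₀ = 0 := by
    rw [integral_sub hL1 (integrable_const 1), hintL]
    simp
  have hsplitf : (∫ x in A, f x ∂P₀) + ∫ x in Aᶜ, f x ∂P₀ = 0 := by
    rw [integral_add_compl hA hf1, hintf]
  have hsplitabs : (∫ x in A, |f x| ∂P₀) + ∫ x in Aᶜ, |f x| ∂P₀ = ∫ x, |f x| ∂P₀ :=
    integral_add_compl hA hf1.abs
  -- |∫_A f| ≤ (1/2) ∫ |f|
  have habsA : (∫ x in A, f x ∂P₀) ≤ (∫ x in A, |f x| ∂P₀) := by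
    calc (∫ x in A, f x ∂P₀) ≤ |∫ x in A, f x ∂P₀| := le_abs_self _
    _ ≤ ∫ x in A, |f x| ∂P₀ := by
        simpa [Real.norm_eq_abs] using
          norm_integral_le_integral_norm (μ := P₀.restrict A) f
  have habsAc : (∫ x in A, f x ∂P₀) ≤ (∫ x in Aᶜ, |f x| ∂P₀) := by
    have : (∫ x in A, f x ∂P₀) = -(∫ x in Aᶜ, f x ∂P₀) := by linarith
    calc (∫ x in A, f x ∂P₀) ≤ |∫ x in Aᶜ, f x ∂P₀| := by
          rw [this]; exact neg_le_abs _
    _ ≤ ∫ x in Aᶜ, |f x| ∂P₀ := by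
        simpa [Real.norm_eq_abs] using
          norm_integral_le_integral_norm (μ := P₀.restrict Aᶜ) f
  have hhalf : (∫ x in A, f x ∂P₀) ≤ (1 / 2) * ∫ x, |f x| ∂P₀ := by linarith
  -- Cauchy–Schwarz : ∫ |f| ≤ √(∫ f²)
  have hconj : Real.HolderConjugate 2 2 := ⟨by norm_num, by norm_num, by norm_num⟩
  have hCS : (∫ x, |f x| ∂P₀) ≤ Real.sqrt (∫ x, f x ^ 2 ∂P₀) := by
    have h := integral_mul_le_Lp_mul_Lq_of_nonneg (μ := P₀) hconj
      (f := fun x => |f x|) (g := fun _ => (1 : ℝ))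
      (Filter.Eventually.of_forall fun x => abs_nonneg _)
      (Filter.Eventually.of_forall fun x => zero_le_one)
      (by rw [show ENNReal.ofReal 2 = 2 by norm_num]; exact hf2.abs) (by simpa using (memLp_const (1 : ℝ) : MemLp _ 2 P₀))
    simp only [mul_one, Real.one_rpow] at h
    have h1 : ∫ x, |f x| ^ (2 : ℝ) ∂P₀ = ∫ x, f x ^ 2 ∂P₀ := by
      refine integral_congr_ae (Filter.Eventually.of_forall fun x => ?_)
      show |f x| ^ (2 : ℝ) = f x ^ 2
      rw [show ((2 : ℝ)) = ((2 : ℕ) : ℝ) by norm_num, Real.rpow_natCast, sq_abs]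
    have h2 : ∫ (_ : E), (1 : ℝ) ∂P₀ = 1 := by simp
    rw [h1, h2, Real.one_rpow, mul_one, ← Real.sqrt_eq_rpow] at h
    exact h
  -- ∫ f² = ∫ L² - 1
  have hsq : ∫ x, f x ^ 2 ∂P₀ = (∫ x, L x ^ 2 ∂P₀) - 1 := by
    have hLsq : Integrable (fun x => L x ^ 2) P₀ := hL2.integrable_sq
    have hsub : Integrable (fun x => 2 * L x - 1) P₀ := by
      exact (hL1.const_mul 2).sub (integrable_const 1)
    have h0 : ∫ x, f x ^ 2 ∂P₀ = ∫ x, (L x ^ 2 - (2 * L x - 1)) ∂P₀ := by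
      refine integral_congr_ae (Filter.Eventually.of_forall fun x => ?_)
      show f x ^ 2 = L x ^ 2 - (2 * L x - 1)
      simp [hfdef]; ring
    rw [h0, integral_sub hLsq hsub,
      integral_sub (hL1.const_mul 2) (integrable_const 1), integral_const_mul, hintL]
    simp
    norm_num
  -- set integrals equal measures
  have hsetA : ∫ x in A, L x ∂P₀ = (Pν A).toReal := Measure.setIntegral_toReal_rnDeriv hac A
  have hsetAc : ∫ x in Aᶜ, L x ∂P₀ = (Pν Aᶜ).toReal := Measure.setIntegral_toReal_rnDeriv hac Aᶜ
  have hP0A : (P₀ A).toReal ≤ α := by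
    have := ENNReal.toReal_mono ENNReal.ofReal_ne_top hPA
    rwa [ENNReal.toReal_ofReal hα.1.le] at this
  have hLA : ∫ x in A, L x ∂P₀ = (∫ x in A, f x ∂P₀) + (P₀ A).toReal := by
    have : ∫ x in A, L x ∂P₀ = ∫ x in A, (f x + 1) ∂P₀ := by
      refine integral_congr_ae (Filter.Eventually.of_forall fun x => ?_); simp [hfdef]
    rw [this, integral_add (hf1.restrict) (integrable_const 1)]
    simp [Measure.restrict_apply_univ, Measure.real]
  have key : (Pν A).toReal ≤ α + (1 / 2) * Real.sqrt ((∫ x, L x ^ 2 ∂P₀) - 1) := by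
    rw [← hsetA, hLA, ← hsq]
    have h2 : (∫ x in A, f x ∂P₀) ≤ (1 / 2) * Real.sqrt (∫ x, f x ^ 2 ∂P₀) := by
      refine hhalf.trans ?_
      have := hCS
      linarith
    linarith
  have hcompl : (Pν Aᶜ).toReal = 1 - (Pν A).toReal := by
    rw [← hsetAc, ← hsetA]
    have := integral_add_compl hA hL1
    rw [hintL] at this
    linarith
  rw [hcompl]
  linarith
end

section
/- Let M, D be positive integers with D ≤ M, let ρ > 0, L > 0, and r > 0 with r² ≤ D/M. Let φ : [0,1] → ℝ be measurable with ∫₀¹ φ(x)dx = 0, ∫₀¹ φ(x)²dx = 1, and |φ(x)| ≤ ρ for all x. Set c = (r/ρ)·√(M/D). Let Y be a Poisson random variable with parameter ρL/M and let (Z_l)_{l≥1} be i.i.d. uniform on [0,1], independent of Y. Define A = (1/2)·( ∏_{l=1}^{Y} (1 + c·φ(Z_l)) + ∏_{l=1}^{Y} (1 − c·φ(Z_l)) ), with empty products equal to 1. Then E[A] = 1 and E[A²] = cosh( r²L/(ρD) ). -/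
open MeasureTheory ProbabilityTheory

lemma aux_prod_integral {Ω : Type*} [MeasurableSpace Ω] (P : Measure Ω) [IsProbabilityMeasure P]
    (Z : ℕ → Ω → ℝ) (hZ : ∀ l, Measurable (Z l))
    (hZlaw : ∀ l, Measure.map (Z l) P = volume.restrict (Set.Icc (0 : ℝ) 1))
    (hZiid : iIndepFun (m := fun _ : ℕ => (inferInstance : MeasurableSpace ℝ)) Z P)
    (h : ℝ → ℝ) (hmeas : Measurable h) (B : ℝ)
    (hB : ∀ x ∈ Set.Icc (0:ℝ) 1, |h x| ≤ B) (n : ℕ) :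
    Integrable (fun ω => ∏ l ∈ Finset.range n, h (Z l ω)) P ∧
      ∫ ω, ∏ l ∈ Finset.range n, h (Z l ω) ∂P = (∫ x in Set.Icc (0:ℝ) 1, h x) ^ n := by
  have hInt1 : ∀ l, Integrable (fun ω => h (Z l ω)) P := by
    intro l
    have : Integrable h (Measure.map (Z l) P) := by
      rw [hZlaw]
      refine Integrable.mono' (integrable_const B) hmeas.aestronglyMeasurable ?_
      filter_upwards [ae_restrict_mem measurableSet_Icc] with x hx
      simpa using hB x hx
    exact (integrable_map_measure hmeas.aestronglyMeasurable (hZ l).aemeasurable).mp this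
  have hE : ∀ l, ∫ ω, h (Z l ω) ∂P = ∫ x in Set.Icc (0:ℝ) 1, h x := by
    intro l
    rw [← hZlaw l, integral_map (hZ l).aemeasurable hmeas.aestronglyMeasurable]
  have hW : iIndepFun (m := fun _ : ℕ => (inferInstance : MeasurableSpace ℝ))
      (fun l => h ∘ Z l) P := hZiid.comp (fun _ => h) (fun _ => hmeas)
  induction n with
  | zero => simp
  | succ n ih =>
    have hind : IndepFun (∏ l ∈ Finset.range n, (h ∘ Z l)) (h ∘ Z n) P :=
      hW.indepFun_prod_range_succ (fun l => hmeas.comp (hZ l)) n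
    have hfun : (∏ l ∈ Finset.range n, (h ∘ Z l)) = fun ω => ∏ l ∈ Finset.range n, h (Z l ω) := by
      ext ω; simp [Finset.prod_apply]
    rw [hfun] at hind
    have hmul : (fun ω => ∏ l ∈ Finset.range (n+1), h (Z l ω))
        = (fun ω => ∏ l ∈ Finset.range n, h (Z l ω)) * (h ∘ Z n) := by
      ext ω; simp [Finset.prod_range_succ, Function.comp]
    constructor
    · rw [hmul]; exact hind.integrable_mul ih.1 (hInt1 n)
    · rw [hmul, hind.integral_mul_eq_mul_integral ih.1.aestronglyMeasurable (hInt1 n).aestronglyMeasurable, ih.2]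
      rw [show integral P (h ∘ Z n) = ∫ ω, h (Z n ω) ∂P from rfl, hE n, pow_succ]

lemma key_integral {Ω : Type*} [MeasurableSpace Ω] (P : Measure Ω) [IsProbabilityMeasure P]
    (lam : ℝ) (hlam : 0 ≤ lam)
    (Y : Ω → ℕ) (Z : ℕ → Ω → ℝ) (hY : Measurable Y) (hZ : ∀ l, Measurable (Z l))
    (hYlaw : ∀ n : ℕ, P {ω | Y ω = n}
      = ENNReal.ofReal (Real.exp (-lam) * lam ^ n / n.factorial))
    (hZlaw : ∀ l, Measure.map (Z l) P = volume.restrict (Set.Icc (0 : ℝ) 1))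
    (hZiid : iIndepFun (m := fun _ : ℕ => (inferInstance : MeasurableSpace ℝ)) Z P)
    (hindep : IndepFun Y (fun ω l => Z l ω) P)
    (h : ℝ → ℝ) (hmeas : Measurable h) (B : ℝ) (hB0 : 0 ≤ B)
    (hB : ∀ x ∈ Set.Icc (0:ℝ) 1, |h x| ≤ B) :
    Integrable (fun ω => ∏ l ∈ Finset.range (Y ω), h (Z l ω)) P ∧
      ∫ ω, ∏ l ∈ Finset.range (Y ω), h (Z l ω) ∂P
        = Real.exp (lam * ((∫ x in Set.Icc (0:ℝ) 1, h x) - 1)) := by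
  set m : ℝ := ∫ x in Set.Icc (0:ℝ) 1, h x with hm
  set F : ℕ → Ω → ℝ := fun n ω => ∏ l ∈ Finset.range n, h (Z l ω) with hF
  set S : ℕ → Set Ω := fun n => {ω | Y ω = n} with hS
  set g : ℕ → Ω → ℝ := fun n => (S n).indicator (F n) with hg
  have hSmeas : ∀ n, MeasurableSet (S n) := fun n => hY (measurableSet_singleton n)
  have hFmeas : ∀ n, Measurable (F n) :=
    fun n => Finset.measurable_prod _ (fun l _ => hmeas.comp (hZ l))
  have hFint : ∀ n, Integrable (F n) P :=
    fun n => (aux_prod_integral P Z hZ hZlaw hZiid h hmeas B hB n).1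
  have hFE : ∀ n, ∫ ω, F n ω ∂P = m ^ n :=
    fun n => (aux_prod_integral P Z hZ hZlaw hZiid h hmeas B hB n).2
  have hgmeas : ∀ n, Measurable (g n) := fun n => (hFmeas n).indicator (hSmeas n)
  -- a.e. all Z_l are in [0,1]
  have haeIcc : ∀ᵐ ω ∂P, ∀ l, Z l ω ∈ Set.Icc (0:ℝ) 1 := by
    rw [ae_all_iff]
    intro l
    have hnull : P ((Z l) ⁻¹' (Set.Icc (0:ℝ) 1)ᶜ) = 0 := by
      rw [← Measure.map_apply (hZ l) measurableSet_Icc.compl, hZlaw l,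
        Measure.restrict_apply measurableSet_Icc.compl]
      simp
    exact (ae_iff).2 hnull
  have hFbd : ∀ᵐ ω ∂P, ∀ n, |F n ω| ≤ B ^ n := by
    filter_upwards [haeIcc] with ω hω n
    calc |F n ω| ≤ ∏ l ∈ Finset.range n, |h (Z l ω)| := (Finset.abs_prod _ _).le
      _ ≤ ∏ l ∈ Finset.range n, B :=
        Finset.prod_le_prod (fun l _ => abs_nonneg _) (fun l _ => hB _ (hω l))
      _ = B ^ n := by simp
  -- pointwise tsum representation
  have hptY : ∀ ω, g (Y ω) ω = F (Y ω) ω := by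
    intro ω
    exact Set.indicator_of_mem (by simp [hS]) _
  have hg0 : ∀ ω, ∀ b ≠ Y ω, g b ω = 0 := fun ω b hb =>
    Set.indicator_of_notMem (by simpa [hS] using (Ne.symm hb)) _
  have hpt : ∀ ω, F (Y ω) ω = ∑' n, g n ω := by
    intro ω
    rw [tsum_eq_single (Y ω) (hg0 ω), hptY ω]
  -- lintegral bound
  have hlin : ∀ n, ∫⁻ ω, ‖g n ω‖₊ ∂P
      ≤ ENNReal.ofReal (Real.exp (-lam) * lam ^ n / n.factorial * B ^ n) := by
    intro n
    have hle : ∀ᵐ ω ∂P, (‖g n ω‖₊ : ENNReal)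
        ≤ (S n).indicator (fun _ => ENNReal.ofReal (B ^ n)) ω := by
      filter_upwards [hFbd] with ω hω
      by_cases hmem : ω ∈ S n
      · rw [Set.indicator_of_mem hmem, hg]
        simp only [Set.indicator_of_mem hmem]
        rw [← enorm_eq_nnnorm, ← ofReal_norm]
        exact ENNReal.ofReal_le_ofReal (by simpa [Real.norm_eq_abs] using hω n)
      · simp [Set.indicator_of_notMem hmem, hg]
    calc ∫⁻ ω, ‖g n ω‖₊ ∂P ≤ ∫⁻ ω, (S n).indicator (fun _ => ENNReal.ofReal (B ^ n)) ω ∂P :=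
        lintegral_mono_ae hle
      _ = ENNReal.ofReal (B ^ n) * P (S n) :=
        lintegral_indicator_const (hSmeas n) _
      _ = ENNReal.ofReal (Real.exp (-lam) * lam ^ n / n.factorial * B ^ n) := by
        rw [hYlaw n, ← ENNReal.ofReal_mul (by positivity)]
        ring_nf
  have hsummable : Summable (fun n : ℕ => Real.exp (-lam) * lam ^ n / n.factorial * B ^ n) := by
    have : (fun n : ℕ => Real.exp (-lam) * lam ^ n / n.factorial * B ^ n)
        = fun n : ℕ => Real.exp (-lam) * ((lam * B) ^ n / n.factorial) := by
      ext n; field_simp [mul_pow]; ring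
    rw [this]
    exact (Real.summable_pow_div_factorial (lam * B)).mul_left _
  have hsum : (∑' n, ∫⁻ ω, ‖g n ω‖₊ ∂P) ≠ ⊤ := by
    refine ne_top_of_le_ne_top ?_ (ENNReal.tsum_le_tsum hlin)
    rw [← ENNReal.ofReal_tsum_of_nonneg (fun n => by positivity) hsummable]
    exact ENNReal.ofReal_ne_top
  -- integral of g n
  have hgint : ∀ n, ∫ ω, g n ω ∂P = Real.exp (-lam) * lam ^ n / n.factorial * m ^ n := by
    intro n
    set I : Ω → ℝ := (S n).indicator (fun _ => 1) with hI
    have hgn : (fun ω => g n ω) = I * F n := by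
      ext ω
      by_cases hmem : ω ∈ S n <;>
        simp [hg, hI, Set.indicator_of_mem, Set.indicator_of_notMem, hmem]
    have hIcomp : I = (({n} : Set ℕ).indicator (fun _ => (1:ℝ))) ∘ Y := by
      ext ω
      by_cases hmem : ω ∈ S n
      · have : Y ω ∈ ({n} : Set ℕ) := hmem
        simp [hI, Set.indicator_of_mem, hmem, Set.mem_singleton_iff.mp this]
      · have : Y ω ∉ ({n} : Set ℕ) := hmem
        simp [hI, Set.indicator_of_notMem, hmem, Pi.single_apply, Set.mem_singleton_iff.not.mp this]
    have hFcomp : F n = (fun z : ℕ → ℝ => ∏ l ∈ Finset.range n, h (z l))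
        ∘ (fun ω l => Z l ω) := rfl
    have hIF : IndepFun I (F n) P := by
      rw [hIcomp, hFcomp]
      exact hindep.comp
        ((measurable_const).indicator (measurableSet_singleton n))
        (Finset.measurable_prod _ (fun l _ => hmeas.comp (measurable_pi_apply l)))
    have hIint : Integrable I P := (integrable_const 1).indicator (hSmeas n)
    rw [hgn, hIF.integral_mul_eq_mul_integral hIint.aestronglyMeasurable (hFint n).aestronglyMeasurable]
    have : ∫ ω, I ω ∂P = (P (S n)).toReal := integral_indicator_one (hSmeas n)
    rw [show integral P I = ∫ ω, I ω ∂P from rfl] at *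
    rw [show integral P (F n) = ∫ ω, F n ω ∂P from rfl, this, hFE n, hYlaw n,
      ENNReal.toReal_ofReal (by positivity)]
  -- put everything together
  have hintegral : ∫ ω, F (Y ω) ω ∂P = ∑' n, Real.exp (-lam) * lam ^ n / n.factorial * m ^ n := by
    calc ∫ ω, F (Y ω) ω ∂P = ∫ ω, ∑' n, g n ω ∂P := by
          congr 1; ext ω; exact hpt ω
      _ = ∑' n, ∫ ω, g n ω ∂P :=
          integral_tsum (fun n => (hgmeas n).aestronglyMeasurable) hsum
      _ = ∑' n, Real.exp (-lam) * lam ^ n / n.factorial * m ^ n := tsum_congr hgint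
  have hexp : ∑' n, Real.exp (-lam) * lam ^ n / n.factorial * m ^ n
      = Real.exp (lam * (m - 1)) := by
    have h1 : (fun n : ℕ => Real.exp (-lam) * lam ^ n / n.factorial * m ^ n)
        = fun n : ℕ => Real.exp (-lam) * ((lam * m) ^ n / n.factorial) := by
      ext n; field_simp [mul_pow]; ring
    rw [h1, tsum_mul_left]
    have h2 : ∑' n : ℕ, (lam * m) ^ n / n.factorial = Real.exp (lam * m) := by
      rw [Real.exp_eq_exp_ℝ, NormedSpace.exp_eq_tsum_div]
    rw [h2, ← Real.exp_add]
    ring_nf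
  -- measurability of the full function
  have hfmeas : Measurable (fun ω => F (Y ω) ω) := by
    have h2 : Measurable (fun p : (ℕ → ℝ) × ℕ => ∏ l ∈ Finset.range p.2, h (p.1 l)) := by
      apply measurable_from_prod_countable_left
      intro n
      have : Measurable (fun z : ℕ → ℝ => ∏ l ∈ Finset.range n, h (z l)) :=
        Finset.measurable_prod _ (fun l _ => hmeas.comp (measurable_pi_apply l))
      simpa using this
    exact h2.comp ((measurable_pi_lambda _ (fun l => hZ l)).prodMk hY)
  have hfint : Integrable (fun ω => F (Y ω) ω) P := by
    refine ⟨hfmeas.aestronglyMeasurable, ?_⟩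
    rw [HasFiniteIntegral]
    have heq : ∀ ω, (‖F (Y ω) ω‖₊ : ENNReal) = ∑' n, (‖g n ω‖₊ : ENNReal) := by
      intro ω
      rw [← hptY ω, tsum_eq_single (Y ω) (fun b hb => by simp [hg0 ω b hb])]
    calc ∫⁻ ω, ‖F (Y ω) ω‖₊ ∂P = ∫⁻ ω, ∑' n, (‖g n ω‖₊ : ENNReal) ∂P := by
          apply lintegral_congr; intro ω; exact heq ω
      _ = ∑' n, ∫⁻ ω, (‖g n ω‖₊ : ENNReal) ∂P :=
          lintegral_tsum (fun n => (hgmeas n).enorm.aemeasurable)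
      _ < ⊤ := hsum.lt_top
  exact ⟨hfint, by rw [show (∫ ω, ∏ l ∈ Finset.range (Y ω), h (Z l ω) ∂P)
    = ∫ ω, F (Y ω) ω ∂P from rfl, hintegral, hexp]⟩
/-- Moments of the per-block likelihood-ratio factor `A_i` in the lower bound construction of
Fromont–Laurent–Reynaud-Bouret: if `Y` is Poisson with parameter `ρL/M`, `(Z_l)` are i.i.d.
uniform on `[0,1]` independent of `Y`, `φ` has mean `0`, unit `L²` norm and `|φ| ≤ ρ` on
`[0,1]`, `c = (r/ρ)√(M/D)` and
`A = (1/2)(∏_{l=1}^Y (1 + c φ(Z_l)) + ∏_{l=1}^Y (1 - c φ(Z_l)))`, then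
`E[A] = 1` and `E[A²] = cosh(r²L/(ρD))`. -/
theorem likelihood_factor_moments {Ω : Type*} [MeasurableSpace Ω]
    (P : Measure Ω) [IsProbabilityMeasure P]
    (M D : ℕ) (hM : 0 < M) (hD : 0 < D) (hDM : D ≤ M)
    (ρ L r : ℝ) (hρ : 0 < ρ) (hL : 0 < L) (hr : 0 < r)
    (hrDM : r ^ 2 ≤ (D : ℝ) / M)
    (φ : ℝ → ℝ) (hφmeas : Measurable φ)
    (hφmean : ∫ x in Set.Icc (0 : ℝ) 1, φ x = 0)
    (hφnorm : ∫ x in Set.Icc (0 : ℝ) 1, (φ x) ^ 2 = 1)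
    (hφbdd : ∀ x ∈ Set.Icc (0 : ℝ) 1, |φ x| ≤ ρ)
    (Y : Ω → ℕ) (Z : ℕ → Ω → ℝ) (hY : Measurable Y) (hZ : ∀ l, Measurable (Z l))
    (hYlaw : ∀ n : ℕ, P {ω | Y ω = n}
      = ENNReal.ofReal (Real.exp (-(ρ * L / M)) * (ρ * L / M) ^ n / n.factorial))
    (hZlaw : ∀ l, Measure.map (Z l) P = volume.restrict (Set.Icc (0 : ℝ) 1))
    (hZiid : ProbabilityTheory.iIndepFun (m := fun _ : ℕ => (inferInstance : MeasurableSpace ℝ)) Z P)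
    (hindep : ProbabilityTheory.IndepFun Y (fun ω l => Z l ω) P)
    (c : ℝ) (hc : c = (r / ρ) * Real.sqrt ((M : ℝ) / D))
    (A : Ω → ℝ)
    (hA : A = fun ω => (1 / 2) * (∏ l ∈ Finset.range (Y ω), (1 + c * φ (Z l ω))
      + ∏ l ∈ Finset.range (Y ω), (1 - c * φ (Z l ω)))) :
    (∫ ω, A ω ∂P) = 1 ∧ (∫ ω, (A ω) ^ 2 ∂P) = Real.cosh (r ^ 2 * L / (ρ * D)) := by
  have hMne : (M : ℝ) ≠ 0 := Nat.cast_ne_zero.mpr hM.ne'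
  have hDne : (D : ℝ) ≠ 0 := Nat.cast_ne_zero.mpr hD.ne'
  set lam : ℝ := ρ * L / M with hlamdef
  have hlam : 0 ≤ lam := by positivity
  have hc0 : 0 ≤ c := by
    rw [hc]
    positivity
  -- c squared
  have hc2 : c ^ 2 = r ^ 2 / ρ ^ 2 * ((M : ℝ) / D) := by
    rw [hc, mul_pow, Real.sq_sqrt (by positivity), div_pow]
  have hlc : lam * c ^ 2 = r ^ 2 * L / (ρ * D) := by
    rw [hlamdef, hc2]
    field_simp
  -- bounds
  set B : ℝ := 1 + c * ρ with hBdef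
  have hB0 : 0 ≤ B := by positivity
  have hbd : ∀ x ∈ Set.Icc (0:ℝ) 1, |c * φ x| ≤ c * ρ := by
    intro x hx
    rw [abs_mul, abs_of_nonneg hc0]
    exact mul_le_mul_of_nonneg_left (hφbdd x hx) hc0
  have hBp : ∀ x ∈ Set.Icc (0:ℝ) 1, |1 + c * φ x| ≤ B := by
    intro x hx
    calc |1 + c * φ x| ≤ |(1:ℝ)| + |c * φ x| := abs_add_le _ _
      _ ≤ 1 + c * ρ := by rw [abs_one]; exact add_le_add_right (hbd x hx) 1
  have hBm : ∀ x ∈ Set.Icc (0:ℝ) 1, |1 - c * φ x| ≤ B := by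
    intro x hx
    calc |1 - c * φ x| ≤ |(1:ℝ)| + |c * φ x| := abs_sub _ _
      _ ≤ 1 + c * ρ := by rw [abs_one]; exact add_le_add_right (hbd x hx) 1
  have hBp2 : ∀ x ∈ Set.Icc (0:ℝ) 1, |(1 + c * φ x) ^ 2| ≤ B ^ 2 := by
    intro x hx
    rw [abs_pow]
    exact pow_le_pow_left₀ (abs_nonneg _) (hBp x hx) 2
  have hBm2 : ∀ x ∈ Set.Icc (0:ℝ) 1, |(1 - c * φ x) ^ 2| ≤ B ^ 2 := by
    intro x hx
    rw [abs_pow]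
    exact pow_le_pow_left₀ (abs_nonneg _) (hBm x hx) 2
  have hBpm : ∀ x ∈ Set.Icc (0:ℝ) 1, |(1 + c * φ x) * (1 - c * φ x)| ≤ B ^ 2 := by
    intro x hx
    rw [abs_mul, sq]
    exact mul_le_mul (hBp x hx) (hBm x hx) (abs_nonneg _) hB0
  -- integrability of φ and φ^2 on [0,1]
  have hφint : IntegrableOn φ (Set.Icc (0:ℝ) 1) volume := by
    refine Integrable.mono' (integrable_const ρ) hφmeas.aestronglyMeasurable ?_
    filter_upwards [ae_restrict_mem measurableSet_Icc] with x hx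
    simpa [Real.norm_eq_abs] using hφbdd x hx
  have hφ2int : IntegrableOn (fun x => φ x ^ 2) (Set.Icc (0:ℝ) 1) volume := by
    refine Integrable.mono' (integrable_const (ρ ^ 2)) (hφmeas.pow_const 2).aestronglyMeasurable ?_
    filter_upwards [ae_restrict_mem measurableSet_Icc] with x hx
    rw [Real.norm_eq_abs, abs_pow]
    exact pow_le_pow_left₀ (abs_nonneg _) (hφbdd x hx) 2
  have hone : ∫ x in Set.Icc (0:ℝ) 1, (1:ℝ) = 1 := by
    simp [Real.volume_Icc]
  -- the five integrals
  have hip : ∫ x in Set.Icc (0:ℝ) 1, (1 + c * φ x) = 1 := by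
    rw [integral_add (integrable_const 1) (hφint.const_mul c), hone, integral_const_mul, hφmean]
    ring
  have him : ∫ x in Set.Icc (0:ℝ) 1, (1 - c * φ x) = 1 := by
    rw [integral_sub (integrable_const 1) (hφint.const_mul c), hone, integral_const_mul, hφmean]
    ring
  have hip2 : ∫ x in Set.Icc (0:ℝ) 1, (1 + c * φ x) ^ 2 = 1 + c ^ 2 := by
    have hfe : (fun x => (1 + c * φ x) ^ 2)
        = fun x => 1 + ((2 * c) * φ x + c ^ 2 * φ x ^ 2) := by
      ext x; ring
    have h24 : Integrable (fun x : ℝ => (2 * c) * φ x + c ^ 2 * φ x ^ 2)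
        (volume.restrict (Set.Icc (0:ℝ) 1)) :=
      (hφint.const_mul (2 * c)).add (hφ2int.const_mul (c ^ 2))
    rw [hfe, integral_add (integrable_const 1) h24, hone,
      integral_add (hφint.const_mul (2 * c)) (hφ2int.const_mul (c ^ 2)),
      integral_const_mul, integral_const_mul, hφmean, hφnorm]
    ring
  have him2 : ∫ x in Set.Icc (0:ℝ) 1, (1 - c * φ x) ^ 2 = 1 + c ^ 2 := by
    have hfe : (fun x => (1 - c * φ x) ^ 2)
        = fun x => 1 + ((-2 * c) * φ x + c ^ 2 * φ x ^ 2) := by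
      ext x; ring
    have h24 : Integrable (fun x : ℝ => (-2 * c) * φ x + c ^ 2 * φ x ^ 2)
        (volume.restrict (Set.Icc (0:ℝ) 1)) :=
      (hφint.const_mul (-2 * c)).add (hφ2int.const_mul (c ^ 2))
    rw [hfe, integral_add (integrable_const 1) h24, hone,
      integral_add (hφint.const_mul (-2 * c)) (hφ2int.const_mul (c ^ 2)),
      integral_const_mul, integral_const_mul, hφmean, hφnorm]
    ring
  have hipm : ∫ x in Set.Icc (0:ℝ) 1, (1 + c * φ x) * (1 - c * φ x) = 1 - c ^ 2 := by
    have hfe : (fun x => (1 + c * φ x) * (1 - c * φ x))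
        = fun x => 1 + (-(c ^ 2)) * φ x ^ 2 := by
      ext x; ring
    rw [hfe, integral_add (integrable_const 1) (hφ2int.const_mul (-(c ^ 2))), hone,
      integral_const_mul, hφnorm]
    ring
  -- apply the key lemma
  have K1 := key_integral P lam hlam Y Z hY hZ hYlaw hZlaw hZiid hindep
    (fun x => 1 + c * φ x) (by fun_prop) B hB0 hBp
  have K2 := key_integral P lam hlam Y Z hY hZ hYlaw hZlaw hZiid hindep
    (fun x => 1 - c * φ x) (by fun_prop) B hB0 hBm
  have K3 := key_integral P lam hlam Y Z hY hZ hYlaw hZlaw hZiid hindep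
    (fun x => (1 + c * φ x) ^ 2) (by fun_prop) (B ^ 2) (by positivity) hBp2
  have K4 := key_integral P lam hlam Y Z hY hZ hYlaw hZlaw hZiid hindep
    (fun x => (1 + c * φ x) * (1 - c * φ x)) (by fun_prop) (B ^ 2) (by positivity) hBpm
  have K5 := key_integral P lam hlam Y Z hY hZ hYlaw hZlaw hZiid hindep
    (fun x => (1 - c * φ x) ^ 2) (by fun_prop) (B ^ 2) (by positivity) hBm2
  -- restated versions
  have I1 : Integrable (fun ω => ∏ l ∈ Finset.range (Y ω), (1 + c * φ (Z l ω))) P := K1.1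
  have I2 : Integrable (fun ω => ∏ l ∈ Finset.range (Y ω), (1 - c * φ (Z l ω))) P := K2.1
  have I3 : Integrable (fun ω => ∏ l ∈ Finset.range (Y ω), (1 + c * φ (Z l ω)) ^ 2) P := K3.1
  have I4 : Integrable (fun ω => ∏ l ∈ Finset.range (Y ω),
      ((1 + c * φ (Z l ω)) * (1 - c * φ (Z l ω)))) P := K4.1
  have I5 : Integrable (fun ω => ∏ l ∈ Finset.range (Y ω), (1 - c * φ (Z l ω)) ^ 2) P := K5.1
  have E1 : ∫ ω, ∏ l ∈ Finset.range (Y ω), (1 + c * φ (Z l ω)) ∂P = 1 := by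
    have := K1.2
    rw [show (∫ x in Set.Icc (0:ℝ) 1, (fun x => 1 + c * φ x) x) = 1 from hip] at this
    simpa using this
  have E2 : ∫ ω, ∏ l ∈ Finset.range (Y ω), (1 - c * φ (Z l ω)) ∂P = 1 := by
    have := K2.2
    rw [show (∫ x in Set.Icc (0:ℝ) 1, (fun x => 1 - c * φ x) x) = 1 from him] at this
    simpa using this
  have E3 : ∫ ω, ∏ l ∈ Finset.range (Y ω), (1 + c * φ (Z l ω)) ^ 2 ∂P
      = Real.exp (r ^ 2 * L / (ρ * D)) := by
    have := K3.2
    rw [show (∫ x in Set.Icc (0:ℝ) 1, (fun x => (1 + c * φ x) ^ 2) x) = 1 + c ^ 2 from hip2]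
      at this
    rw [show lam * (1 + c ^ 2 - 1) = r ^ 2 * L / (ρ * D) from by rw [← hlc]; ring] at this
    exact this
  have E4 : ∫ ω, ∏ l ∈ Finset.range (Y ω), ((1 + c * φ (Z l ω)) * (1 - c * φ (Z l ω))) ∂P
      = Real.exp (-(r ^ 2 * L / (ρ * D))) := by
    have := K4.2
    rw [show (∫ x in Set.Icc (0:ℝ) 1, (fun x => (1 + c * φ x) * (1 - c * φ x)) x)
        = 1 - c ^ 2 from hipm] at this
    rw [show lam * (1 - c ^ 2 - 1) = -(r ^ 2 * L / (ρ * D)) from by rw [← hlc]; ring] at this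
    exact this
  have E5 : ∫ ω, ∏ l ∈ Finset.range (Y ω), (1 - c * φ (Z l ω)) ^ 2 ∂P
      = Real.exp (r ^ 2 * L / (ρ * D)) := by
    have := K5.2
    rw [show (∫ x in Set.Icc (0:ℝ) 1, (fun x => (1 - c * φ x) ^ 2) x) = 1 + c ^ 2 from him2]
      at this
    rw [show lam * (1 + c ^ 2 - 1) = r ^ 2 * L / (ρ * D) from by rw [← hlc]; ring] at this
    exact this
  constructor
  · rw [hA]
    rw [show (∫ ω, (1 / 2 : ℝ) * (∏ l ∈ Finset.range (Y ω), (1 + c * φ (Z l ω))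
        + ∏ l ∈ Finset.range (Y ω), (1 - c * φ (Z l ω))) ∂P)
      = (1 / 2) * ∫ ω, (∏ l ∈ Finset.range (Y ω), (1 + c * φ (Z l ω))
        + ∏ l ∈ Finset.range (Y ω), (1 - c * φ (Z l ω))) ∂P from integral_const_mul _ _]
    rw [integral_add I1 I2, E1, E2]
    norm_num
  · have hA2 : (fun ω => (A ω) ^ 2) = fun ω =>
        (1 / 4) * ((∏ l ∈ Finset.range (Y ω), (1 + c * φ (Z l ω)) ^ 2)
          + ((2 : ℝ) * ∏ l ∈ Finset.range (Y ω), ((1 + c * φ (Z l ω)) * (1 - c * φ (Z l ω)))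
          + ∏ l ∈ Finset.range (Y ω), (1 - c * φ (Z l ω)) ^ 2)) := by
      ext ω
      rw [hA]
      rw [Finset.prod_pow, Finset.prod_pow, Finset.prod_mul_distrib]
      ring
    rw [show (∫ ω, (A ω) ^ 2 ∂P) = ∫ ω, (fun ω => (A ω) ^ 2) ω ∂P from rfl, hA2]
    have I45 : Integrable (fun ω => (2 : ℝ) * ∏ l ∈ Finset.range (Y ω),
        ((1 + c * φ (Z l ω)) * (1 - c * φ (Z l ω)))
        + ∏ l ∈ Finset.range (Y ω), (1 - c * φ (Z l ω)) ^ 2) P :=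
      (I4.const_mul 2).add I5
    rw [integral_const_mul,
      integral_add I3 I45,
      integral_add (I4.const_mul 2) I5,
      integral_const_mul, E3, E4, E5, Real.cosh_eq]
    ring
end

section
/- Let M and D be positive integers with D ≤ M, and let I and I' be independent random subsets of {1,…,M}, each uniformly distributed on the collection of D-element subsets of {1,…,M}. Then for every θ ≥ 0, E[ exp( θ·|I ∩ I'| ) ] ≤ ( 1 + (D/M)·(e^{θ} − 1) )^{D}. -/
open MeasureTheory

section CombAux
open Finset

variable {α : Type*} [Fintype α] [DecidableEq α]

lemma neg_corr (w : ℝ) (hw : 1 ≤ w) (A : Finset α) (x : α) (hxA : x ∉ A) (D : ℕ) :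
    ((Fintype.card α - D : ℕ) : ℝ) *
      ∑ S ∈ (powersetCard D (univ : Finset α)).filter (fun S => x ∈ S), w ^ (A ∩ S).card
    ≤ (D : ℝ) * ∑ S ∈ (powersetCard D (univ : Finset α)).filter (fun S => x ∉ S),
        w ^ (A ∩ S).card := by
  have hw0 : (0:ℝ) ≤ w := le_trans zero_le_one hw
  -- rewrite LHS as a double sum over (S, y) with y ∉ S
  have hL : ((Fintype.card α - D : ℕ) : ℝ) *
      ∑ S ∈ (powersetCard D (univ : Finset α)).filter (fun S => x ∈ S), w ^ (A ∩ S).card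
      = ∑ S ∈ (powersetCard D (univ : Finset α)).filter (fun S => x ∈ S),
          ∑ _y ∈ Sᶜ, w ^ (A ∩ S).card := by
    rw [Finset.mul_sum]
    refine Finset.sum_congr rfl (fun S hS => ?_)
    simp only [mem_filter, mem_powersetCard] at hS
    rw [Finset.sum_const, Finset.card_compl, hS.1.2, nsmul_eq_mul]
  have hR : (D : ℝ) *
      ∑ S ∈ (powersetCard D (univ : Finset α)).filter (fun S => x ∉ S), w ^ (A ∩ S).card
      = ∑ S ∈ (powersetCard D (univ : Finset α)).filter (fun S => x ∉ S),
          ∑ _z ∈ S, w ^ (A ∩ S).card := by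
    rw [Finset.mul_sum]
    refine Finset.sum_congr rfl (fun S hS => ?_)
    simp only [mem_filter, mem_powersetCard] at hS
    rw [Finset.sum_const, hS.1.2, nsmul_eq_mul]
  rw [hL, hR]
  -- termwise bound then bijection
  have hstep : ∀ S ∈ (powersetCard D (univ : Finset α)).filter (fun S => x ∈ S),
      ∀ y ∈ Sᶜ, w ^ (A ∩ S).card ≤ w ^ (A ∩ (insert y (S.erase x))).card := by
    intro S hS y hy
    apply pow_le_pow_right₀ hw
    apply Finset.card_le_card
    intro a ha
    simp only [mem_inter] at ha ⊢
    refine ⟨ha.1, Finset.mem_insert_of_mem (Finset.mem_erase.2 ⟨?_, ha.2⟩)⟩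
    rintro rfl; exact hxA ha.1
  calc ∑ S ∈ (powersetCard D (univ : Finset α)).filter (fun S => x ∈ S),
          ∑ _y ∈ Sᶜ, w ^ (A ∩ S).card
      ≤ ∑ S ∈ (powersetCard D (univ : Finset α)).filter (fun S => x ∈ S),
          ∑ y ∈ Sᶜ, w ^ (A ∩ (insert y (S.erase x))).card := by
        refine Finset.sum_le_sum (fun S hS => Finset.sum_le_sum (fun y hy => hstep S hS y hy))
    _ = ∑ S ∈ (powersetCard D (univ : Finset α)).filter (fun S => x ∉ S),
          ∑ _z ∈ S, w ^ (A ∩ S).card := by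
        rw [Finset.sum_sigma', Finset.sum_sigma']
        refine Finset.sum_nbij' (fun p => ⟨insert p.2 (p.1.erase x), p.2⟩)
          (fun q => ⟨insert x (q.1.erase q.2), q.2⟩) ?_ ?_ ?_ ?_ ?_
        · rintro ⟨S, y⟩ hp
          simp only [Finset.mem_sigma, mem_filter, mem_powersetCard, mem_compl] at hp ⊢
          obtain ⟨⟨⟨-, hcard⟩, hxS⟩, hyS⟩ := hp
          have hxy : x ≠ y := by rintro rfl; exact hyS hxS
          refine ⟨⟨⟨Finset.subset_univ _, ?_⟩, ?_⟩, Finset.mem_insert_self _ _⟩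
          · rw [Finset.card_insert_of_notMem (fun h => hyS (Finset.mem_of_mem_erase h)),
              Finset.card_erase_of_mem hxS, hcard, Nat.sub_add_cancel]
            rw [← hcard] at *; exact Finset.card_pos.2 ⟨x, hxS⟩
          · simp only [Finset.mem_insert, not_or]
            exact ⟨hxy, fun h => (Finset.mem_erase.1 h).1 rfl⟩
        · rintro ⟨S, z⟩ hq
          simp only [Finset.mem_sigma, mem_filter, mem_powersetCard, mem_compl] at hq ⊢
          obtain ⟨⟨⟨-, hcard⟩, hxS⟩, hzS⟩ := hq
          have hxz : x ≠ z := by rintro rfl; exact hxS hzS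
          refine ⟨⟨⟨Finset.subset_univ _, ?_⟩, Finset.mem_insert_self _ _⟩, ?_⟩
          · rw [Finset.card_insert_of_notMem (fun h => hxS (Finset.mem_of_mem_erase h)),
              Finset.card_erase_of_mem hzS, hcard, Nat.sub_add_cancel]
            rw [← hcard] at *; exact Finset.card_pos.2 ⟨z, hzS⟩
          · simp only [Finset.mem_insert, not_or]
            exact ⟨fun h => hxz h.symm, fun h => (Finset.mem_erase.1 h).1 rfl⟩
        · rintro ⟨S, y⟩ hp
          simp only [Finset.mem_sigma, mem_filter, mem_powersetCard, mem_compl] at hp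
          obtain ⟨⟨⟨-, hcard⟩, hxS⟩, hyS⟩ := hp
          have h1 : y ∉ S.erase x := fun h => hyS (Finset.mem_of_mem_erase h)
          simp only [Sigma.mk.inj_iff, heq_eq_eq, and_true]
          rw [Finset.erase_insert h1, Finset.insert_erase hxS]
        · rintro ⟨S, z⟩ hq
          simp only [Finset.mem_sigma, mem_filter, mem_powersetCard, mem_compl] at hq
          obtain ⟨⟨⟨-, hcard⟩, hxS⟩, hzS⟩ := hq
          have h1 : x ∉ S.erase z := fun h => hxS (Finset.mem_of_mem_erase h)
          simp only [Sigma.mk.inj_iff, heq_eq_eq, and_true]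
          rw [Finset.erase_insert h1, Finset.insert_erase hzS]
        · rintro ⟨S, y⟩ hp; rfl

lemma step_lemma (w : ℝ) (hw : 1 ≤ w) (A : Finset α) (x : α) (hxA : x ∉ A) (D : ℕ)
    (hDM : D ≤ Fintype.card α) :
    (Fintype.card α : ℝ) * ∑ S ∈ powersetCard D (univ : Finset α), w ^ ((insert x A ∩ S).card)
      ≤ ((Fintype.card α : ℝ) + D * (w - 1)) *
        ∑ S ∈ powersetCard D (univ : Finset α), w ^ ((A ∩ S).card) := by
  have hw0 : (0:ℝ) ≤ w := le_trans zero_le_one hw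
  set F := powersetCard D (univ : Finset α)
  have hsplit1 : ∑ S ∈ F, w ^ ((insert x A ∩ S).card)
      = w * (∑ S ∈ F.filter (fun S => x ∈ S), w ^ (A ∩ S).card)
        + ∑ S ∈ F.filter (fun S => x ∉ S), w ^ (A ∩ S).card := by
    rw [← Finset.sum_filter_add_sum_filter_not F (fun S => x ∈ S), Finset.mul_sum]
    congr 1
    · refine Finset.sum_congr rfl (fun S hS => ?_)
      have hxS : x ∈ S := (Finset.mem_filter.1 hS).2
      rw [Finset.insert_inter_of_mem hxS,
        Finset.card_insert_of_notMem (fun h => hxA (Finset.mem_inter.1 h).1), pow_succ]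
      ring
    · refine Finset.sum_congr rfl (fun S hS => ?_)
      have hxS : x ∉ S := (Finset.mem_filter.1 hS).2
      rw [Finset.insert_inter_of_notMem hxS]
  have hsplit2 : ∑ S ∈ F, w ^ ((A ∩ S).card)
      = (∑ S ∈ F.filter (fun S => x ∈ S), w ^ (A ∩ S).card)
        + ∑ S ∈ F.filter (fun S => x ∉ S), w ^ (A ∩ S).card :=
    (Finset.sum_filter_add_sum_filter_not F _ _).symm
  have hnc := neg_corr w hw A x hxA D
  have hcast : ((Fintype.card α - D : ℕ) : ℝ) = (Fintype.card α : ℝ) - D := by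
    rw [Nat.cast_sub hDM]
  rw [hcast] at hnc
  rw [hsplit1, hsplit2]
  nlinarith [hnc, hw0, hw]
lemma main_comb (w : ℝ) (hw : 1 ≤ w) (D : ℕ) (hDM : D ≤ Fintype.card α) (A : Finset α) :
    (Fintype.card α : ℝ) ^ A.card * ∑ S ∈ powersetCard D (univ : Finset α), w ^ ((A ∩ S).card)
      ≤ ((Fintype.card α : ℝ) + D * (w - 1)) ^ A.card * ((Fintype.card α).choose D) := by
  have hw0 : (0:ℝ) ≤ w := le_trans zero_le_one hw
  have hb0 : (0:ℝ) ≤ (Fintype.card α : ℝ) + D * (w - 1) := by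
    have : (0:ℝ) ≤ (D:ℝ) * (w - 1) := mul_nonneg (Nat.cast_nonneg _) (by linarith)
    positivity
  induction A using Finset.induction_on with
  | empty =>
      simp [Finset.card_powersetCard]
  | insert _ _ hxA =>
      rename_i x A ih
      rw [Finset.card_insert_of_notMem hxA, pow_succ, pow_succ]
      calc (Fintype.card α : ℝ) ^ A.card * (Fintype.card α : ℝ) *
              ∑ S ∈ powersetCard D (univ : Finset α), w ^ ((insert x A ∩ S).card)
          ≤ (Fintype.card α : ℝ) ^ A.card * (((Fintype.card α : ℝ) + D * (w - 1)) *
              ∑ S ∈ powersetCard D (univ : Finset α), w ^ ((A ∩ S).card)) := by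
            rw [mul_assoc]
            exact mul_le_mul_of_nonneg_left (step_lemma w hw A x hxA D hDM) (by positivity)
        _ = ((Fintype.card α : ℝ) + D * (w - 1)) *
              ((Fintype.card α : ℝ) ^ A.card *
                ∑ S ∈ powersetCard D (univ : Finset α), w ^ ((A ∩ S).card)) := by ring
        _ ≤ ((Fintype.card α : ℝ) + D * (w - 1)) *
              (((Fintype.card α : ℝ) + D * (w - 1)) ^ A.card * ((Fintype.card α).choose D)) :=
            mul_le_mul_of_nonneg_left ih hb0
        _ = ((Fintype.card α : ℝ) + D * (w - 1)) ^ A.card *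
              ((Fintype.card α : ℝ) + D * (w - 1)) * ((Fintype.card α).choose D) := by ring

lemma comb_bound (w : ℝ) (hw : 1 ≤ w) (D : ℕ) (hM : 0 < Fintype.card α)
    (hDM : D ≤ Fintype.card α) (A : Finset α) (hA : A.card = D) :
    ∑ S ∈ powersetCard D (univ : Finset α), w ^ ((A ∩ S).card)
      ≤ ((Fintype.card α).choose D : ℝ) *
        (1 + (D / (Fintype.card α : ℝ)) * (w - 1)) ^ D := by
  have h := main_comb w hw D hDM A
  rw [hA] at h
  have hMpos : (0:ℝ) < (Fintype.card α : ℝ) := by exact_mod_cast hM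
  have hMpow : (0:ℝ) < (Fintype.card α : ℝ) ^ D := by positivity
  have h2 : ∑ S ∈ powersetCard D (univ : Finset α), w ^ ((A ∩ S).card)
      ≤ ((Fintype.card α : ℝ) + D * (w - 1)) ^ D * ((Fintype.card α).choose D)
          / (Fintype.card α : ℝ) ^ D := by
    rw [le_div_iff₀ hMpow, mul_comm]
    exact h
  calc ∑ S ∈ powersetCard D (univ : Finset α), w ^ ((A ∩ S).card)
      ≤ ((Fintype.card α : ℝ) + D * (w - 1)) ^ D * ((Fintype.card α).choose D)
          / (Fintype.card α : ℝ) ^ D := h2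
    _ = ((Fintype.card α).choose D : ℝ) *
        (1 + (D / (Fintype.card α : ℝ)) * (w - 1)) ^ D := by
      rw [div_eq_iff (ne_of_gt hMpow), mul_assoc, mul_comm, ← mul_pow]
      congr 2
      field_simp

end CombAux

open MeasureTheory Finset ENNReal

/-- Exponential moment bound for the intersection of two independent uniform random
`D`-subsets of `{1,…,M}`: `E[exp(θ|I ∩ I'|)] ≤ (1 + (D/M)(e^θ - 1))^D`, i.e. the exponential
moment of the hypergeometric variable `|I ∩ I'|` is dominated by that of a
Binomial(`D`, `D/M`) variable. -/
theorem hypergeometric_exp_moment_le_binomial {Ω : Type*} [MeasurableSpace Ω]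
    (P : Measure Ω) [IsProbabilityMeasure P]
    (M D : ℕ) (hM : 0 < M) (hD : 0 < D) (hDM : D ≤ M)
    (I I' : Ω → Finset (Fin M))
    (hImeas : ∀ t : Finset (Fin M), MeasurableSet {ω | I ω = t})
    (hI'meas : ∀ t : Finset (Fin M), MeasurableSet {ω | I' ω = t})
    (hIlaw : ∀ t : Finset (Fin M), t.card = D →
      P {ω | I ω = t} = ENNReal.ofReal (1 / (M.choose D)))
    (hI'law : ∀ t : Finset (Fin M), t.card = D →
      P {ω | I' ω = t} = ENNReal.ofReal (1 / (M.choose D)))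
    (hindep : ∀ t t' : Finset (Fin M),
      P ({ω | I ω = t} ∩ {ω | I' ω = t'}) = P {ω | I ω = t} * P {ω | I' ω = t'})
    (θ : ℝ) (hθ : 0 ≤ θ) :
    ∫ ω, Real.exp (θ * ((I ω ∩ I' ω).card : ℝ)) ∂P
      ≤ (1 + ((D : ℝ) / M) * (Real.exp θ - 1)) ^ D := by
  classical
  set C : ℕ := M.choose D with hC
  have hCpos : 0 < C := Nat.choose_pos hDM
  have hCne : (C:ℝ) ≠ 0 := by exact_mod_cast hCpos.ne'
  set F : Finset (Finset (Fin M)) := powersetCard D (univ : Finset (Fin M)) with hF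
  have hcardF : F.card = C := by
    rw [hF, Finset.card_powersetCard, Finset.card_univ, Fintype.card_fin]
  -- total mass of card-D sets is 1
  have hsum : ∀ (J : Ω → Finset (Fin M)),
      (∀ t : Finset (Fin M), MeasurableSet {ω | J ω = t}) →
      (∀ t : Finset (Fin M), t.card = D → P {ω | J ω = t} = ENNReal.ofReal (1 / C)) →
      ∀ t : Finset (Fin M), t.card ≠ D → P {ω | J ω = t} = 0 := by
    intro J hJm hJl t ht
    have htF : t ∉ F := by
      simp only [hF, mem_powersetCard_univ]
      exact ht
    have hdisj : (↑(insert t F) : Set (Finset (Fin M))).PairwiseDisjoint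
        (fun s => {ω | J ω = s}) := by
      intro a _ b _ hab
      simp only [Function.onFun, Set.disjoint_left]
      rintro ω (rfl : J ω = a) (rfl : J ω = b)
      exact hab rfl
    have hle : ∑ s ∈ insert t F, P {ω | J ω = s} ≤ 1 := by
      rw [← measure_biUnion_finset (μ := P) hdisj (fun s _ => hJm s)]
      have h2 : P (⋃ s ∈ (insert t F : Finset (Finset (Fin M))), {ω | J ω = s}) ≤ P Set.univ :=
        measure_mono (Set.subset_univ _)
      rwa [measure_univ] at h2
    have hFsum : ∑ s ∈ F, P {ω | J ω = s} = 1 := by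
      have : ∑ s ∈ F, P {ω | J ω = s} = F.card • ENNReal.ofReal (1 / C) := by
        rw [Finset.sum_congr rfl (fun s hs => hJl s (by simpa [hF, mem_powersetCard_univ] using hs)),
          Finset.sum_const]
      rw [this, hcardF, nsmul_eq_mul, ← ENNReal.ofReal_natCast,
        ← ENNReal.ofReal_mul (by positivity)]
      rw [mul_one_div, div_self hCne, ENNReal.ofReal_one]
    rw [Finset.sum_insert htF, hFsum] at hle
    have h1 : (1:ℝ≥0∞) ≠ ⊤ := ENNReal.one_ne_top
    nth_rewrite 2 [← zero_add (1:ℝ≥0∞)] at hle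
    exact le_antisymm ((ENNReal.add_le_add_iff_right h1).1 hle) zero_le
  have hIzero := hsum I hImeas hIlaw
  have hI'zero := hsum I' hI'meas hI'law
  -- decompose the integrand
  have hdecomp : (fun ω => Real.exp (θ * ((I ω ∩ I' ω).card : ℝ)))
      = fun ω => ∑ t : Finset (Fin M), ∑ t' : Finset (Fin M),
          Set.indicator ({ω | I ω = t} ∩ {ω | I' ω = t'})
            (fun _ => Real.exp (θ * ((t ∩ t').card : ℝ))) ω := by
    funext ω
    simp only [Set.indicator_apply, Set.mem_inter_iff, Set.mem_setOf_eq]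
    rw [Finset.sum_eq_single (I ω)]
    · rw [Finset.sum_eq_single (I' ω)]
      · simp
      · intro b _ hb; simp [hb.symm]
      · intro h; exact absurd (Finset.mem_univ _) h
    · intro b _ hb
      apply Finset.sum_eq_zero
      intro c _
      simp [hb.symm]
    · intro h; exact absurd (Finset.mem_univ _) h
  rw [hdecomp]
  have hint : ∀ (t t' : Finset (Fin M)), Integrable
      (Set.indicator ({ω | I ω = t} ∩ {ω | I' ω = t'})
        (fun _ => Real.exp (θ * ((t ∩ t').card : ℝ)))) P :=
    fun t t' => (integrable_const _).indicator ((hImeas t).inter (hI'meas t'))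
  rw [integral_finset_sum _ (fun t _ => integrable_finset_sum _ (fun t' _ => hint t t'))]
  have hval : ∀ t t' : Finset (Fin M),
      ∫ ω, Set.indicator ({ω | I ω = t} ∩ {ω | I' ω = t'})
        (fun _ => Real.exp (θ * ((t ∩ t').card : ℝ))) ω ∂P
      = (P ({ω | I ω = t} ∩ {ω | I' ω = t'})).toReal * Real.exp (θ * ((t ∩ t').card : ℝ)) := by
    intro t t'
    rw [integral_indicator_const _ ((hImeas t).inter (hI'meas t')), smul_eq_mul, measureReal_def]
  simp only [integral_finset_sum _ (fun t' _ => hint _ t'), hval]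
  -- restrict to card-D sets
  have hterm0 : ∀ t t' : Finset (Fin M), (t.card ≠ D ∨ t'.card ≠ D) →
      P ({ω | I ω = t} ∩ {ω | I' ω = t'}) = 0 := by
    intro t t' h
    rw [hindep t t']
    rcases h with h | h
    · rw [hIzero t h, zero_mul]
    · rw [hI'zero t' h, mul_zero]
  have hrestrict : ∑ t : Finset (Fin M), ∑ t' : Finset (Fin M),
      (P ({ω | I ω = t} ∩ {ω | I' ω = t'})).toReal * Real.exp (θ * ((t ∩ t').card : ℝ))
      = ∑ t ∈ F, ∑ t' ∈ F,
      (P ({ω | I ω = t} ∩ {ω | I' ω = t'})).toReal * Real.exp (θ * ((t ∩ t').card : ℝ)) := by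
    rw [← Finset.sum_subset (Finset.subset_univ F)]
    · refine Finset.sum_congr rfl (fun t ht => ?_)
      rw [← Finset.sum_subset (Finset.subset_univ F)]
      intro t' _ ht'
      rw [hterm0 t t' (Or.inr (by simpa [hF, mem_powersetCard_univ] using ht'))]
      simp
    · intro t _ ht
      apply Finset.sum_eq_zero
      intro t' _
      rw [hterm0 t t' (Or.inl (by simpa [hF, mem_powersetCard_univ] using ht))]
      simp
  rw [hrestrict]
  -- compute probabilities on card-D sets
  have hprob : ∀ t ∈ F, ∀ t' ∈ F,
      (P ({ω | I ω = t} ∩ {ω | I' ω = t'})).toReal = (1 / C) * (1 / C) := by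
    intro t ht t' ht'
    rw [hindep t t', hIlaw t (by simpa [hF, mem_powersetCard_univ] using ht),
      hI'law t' (by simpa [hF, mem_powersetCard_univ] using ht'),
      ← ENNReal.ofReal_mul (by positivity), ENNReal.toReal_ofReal (by positivity)]
  -- exponential as power
  have hexp : ∀ k : ℕ, Real.exp (θ * (k:ℝ)) = (Real.exp θ) ^ k := by
    intro k
    rw [mul_comm, Real.exp_nat_mul]
  have hw : 1 ≤ Real.exp θ := by
    rw [← Real.exp_zero]; exact Real.exp_le_exp.2 hθ
  have hMcard : Fintype.card (Fin M) = M := Fintype.card_fin M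
  have hbound : ∀ t ∈ F, ∑ t' ∈ F, (Real.exp θ) ^ ((t ∩ t').card)
      ≤ (C:ℝ) * (1 + ((D:ℝ) / M) * (Real.exp θ - 1)) ^ D := by
    intro t ht
    have := comb_bound (α := Fin M) (Real.exp θ) hw D (by rw [hMcard]; exact hM)
      (by rw [hMcard]; exact hDM) t (by simpa [hF, mem_powersetCard_univ] using ht)
    rw [hMcard] at this
    exact this
  calc ∑ t ∈ F, ∑ t' ∈ F,
        (P ({ω | I ω = t} ∩ {ω | I' ω = t'})).toReal * Real.exp (θ * ((t ∩ t').card : ℝ))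
      = ∑ t ∈ F, (1/(C:ℝ)) * (1/(C:ℝ)) * ∑ t' ∈ F, (Real.exp θ) ^ ((t ∩ t').card) := by
        refine Finset.sum_congr rfl (fun t ht => ?_)
        rw [Finset.mul_sum]
        refine Finset.sum_congr rfl (fun t' ht' => ?_)
        rw [hprob t ht t' ht', hexp]
    _ ≤ ∑ t ∈ F, (1/(C:ℝ)) * (1/(C:ℝ)) * ((C:ℝ) * (1 + ((D:ℝ) / M) * (Real.exp θ - 1)) ^ D) := by
        refine Finset.sum_le_sum (fun t ht => mul_le_mul_of_nonneg_left (hbound t ht) (by positivity))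
    _ = (1 + ((D:ℝ) / M) * (Real.exp θ - 1)) ^ D := by
        rw [Finset.sum_const, hcardF, nsmul_eq_mul]
        field_simp
end

section
/- Let R > 0, R' > 0, R'' ≥ 2, δ > 0, γ > 0, let J ∈ ℕ, M = 2^J, let D be an integer with 1 ≤ D ≤ M, and let r > 0. Let φ = 1_{[0,1/2)} − 1_{[1/2,1)}, set φ_{M,i}(x) = φ(Mx − i + 1) for i = 1,…,M, and define S_{M,D,r} = { 1_{[0,1]} + r·√(M/D)·Σ_{i=1}^{M} Δ_i ξ_i φ_{M,i} : ξ ∈ {−1,+1}^M, Δ ∈ {0,1}^M, Σ_{i=1}^{M} Δ_i = D }. If r² ≤ min( D/M , R²·M^{−2δ} , R'^{2(1+2γ)}·D^{−2γ} ), then S_{M,D,r} ⊆ B^δ_{2,∞}(R) ∩ W_γ(R') ∩ L^∞(R''), and every s ∈ S_{M,D,r} satisfies d(s, S_0) = r, where S_0 is the set of constant functions on [0,1] and d is the L²([0,1]) distance. -/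
open MeasureTheory Filter Set
open scoped ENNReal

noncomputable section

/-- The Haar mother wavelet `ψ = 1_{[0,1/2)} - 1_{[1/2,1)}`. -/
def haarPsi (x : ℝ) : ℝ :=
  Set.indicator (Set.Ico (0 : ℝ) (1 / 2)) (fun _ => (1 : ℝ)) x
    - Set.indicator (Set.Ico (1 / 2 : ℝ) 1) (fun _ => (1 : ℝ)) x

/-- The Haar function `φ_{(j,k)}(x) = 2^{j/2} ψ(2^j x - k)`. -/
def haarFn (j k : ℕ) (x : ℝ) : ℝ := (2 : ℝ) ^ ((j : ℝ) / 2) * haarPsi ((2 : ℝ) ^ j * x - k)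

/-- Haar coefficient `α_{(j,k)} = ⟨s, φ_{(j,k)}⟩`. -/
def haarCoeff (s : ℝ → ℝ) (j k : ℕ) : ℝ := ∫ x in Set.Icc (0 : ℝ) 1, s x * haarFn j k x

/-- `α₀ = ⟨s, φ₀⟩ = ∫₀¹ s`. -/
def meanVal (s : ℝ → ℝ) : ℝ := ∫ x in Set.Icc (0 : ℝ) 1, s x

/-- Squared L² distance from `s` to the set of constant functions on `[0,1]`. -/
def distSqToConst (s : ℝ → ℝ) : ℝ := ∫ x in Set.Icc (0 : ℝ) 1, (s x - meanVal s) ^ 2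

/-- L² distance from `s` to the set `S₀` of constant functions on `[0,1]`. -/
def sepDist (s : ℝ → ℝ) : ℝ := Real.sqrt (distSqToConst s)

/-- Lebesgue measure restricted to `[0,1]` (the uniform distribution on `[0,1]`). -/
def unif01 : Measure ℝ := volume.restrict (Set.Icc (0 : ℝ) 1)

/-- The Besov body `B^δ_{2,∞}(R)`. -/
def besovBody (δ R : ℝ) : Set (ℝ → ℝ) :=
  {s | (∀ x ∈ Set.Icc (0 : ℝ) 1, 0 ≤ s x) ∧ MemLp s 2 unif01 ∧
    ∀ j : ℕ, ∑ k ∈ Finset.range (2 ^ j), (haarCoeff s j k) ^ 2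
      ≤ R ^ 2 * (2 : ℝ) ^ (-(2 * (j : ℝ) * δ))}

/-- The weak Besov body `W_γ(R')`. -/
def weakBesovBody (γ R' : ℝ) : Set (ℝ → ℝ) :=
  {s | (∀ x ∈ Set.Icc (0 : ℝ) 1, 0 ≤ s x) ∧ MemLp s 2 unif01 ∧
    ∀ t : ℝ, 0 < t →
      ∑' j : ℕ, ∑ k ∈ Finset.range (2 ^ j),
          (if (haarCoeff s j k) ^ 2 ≤ t then (haarCoeff s j k) ^ 2 else 0)
        ≤ R' ^ 2 * t ^ (2 * γ / (1 + 2 * γ))}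

/-- The ball `L^∞(R'')` of functions bounded by `R''` on `[0,1]`. -/
def linfBall (R'' : ℝ) : Set (ℝ → ℝ) := {s | ∀ x ∈ Set.Icc (0 : ℝ) 1, |s x| ≤ R''}

/-- Observation space: the number of points and the sequence of points. -/
abbrev Obs : Type := ℕ × (ℕ → ℝ)

/-- Law of one point of the process: density `s/∫s` on `[0,1]`
(uniform as irrelevant convention if `∫ s = 0`). -/
def pointLaw (s : ℝ → ℝ) : Measure ℝ :=
  if meanVal s = 0 then unif01
  else unif01.withDensity fun x => ENNReal.ofReal (s x / meanVal s)

/-- Padding of a finite vector into a sequence. -/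
def pad (n : ℕ) (v : Fin n → ℝ) : ℕ → ℝ := fun i => if h : i < n then v ⟨i, h⟩ else 0

/-- Poisson probability `e^{-μ} μ^n / n!`. -/
def poissonWeight (μ : ℝ) (n : ℕ) : ℝ≥0∞ := ENNReal.ofReal (Real.exp (-μ) * μ ^ n / n.factorial)

/-- Product of `n` i.i.d. copies of a law. -/
def iidLaw (ν : Measure ℝ) (n : ℕ) : Measure (Fin n → ℝ) := Measure.pi fun _ => ν

/-- The law `P_s` of the observation `(N_L, (X_1, …, X_{N_L}))` of a Poisson process with
intensity `s` w.r.t. `L·dx` on `[0,1]`: `N_L` is Poisson with parameter `L ∫₀¹ s`, and given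
`N_L = n` the points are `n` i.i.d. draws from `s/∫s` (padded by `0` beyond the `N_L`-th
coordinate, which a test may not look at). -/
def obsLaw (L : ℝ) (s : ℝ → ℝ) : Measure Obs :=
  Measure.sum fun n : ℕ =>
    poissonWeight (L * meanVal s) n •
      Measure.map (fun v => (n, pad n v)) (iidLaw (pointLaw s) n)

/-- A test: a measurable `{0,1}`-valued function of the observation, depending on the sequence
of points only through its first `N_L` coordinates. -/
def IsTest (Φ : Obs → Bool) : Prop :=
  Measurable Φ ∧ ∀ n : ℕ, ∀ x y : ℕ → ℝ, (∀ i < n, x i = y i) → Φ (n, x) = Φ (n, y)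

/-- A level `α` test: `P_s(Φ = 1) ≤ α` for every nonnegative constant intensity. -/
def IsLevel (L α : ℝ) (Φ : Obs → Bool) : Prop :=
  ∀ c : ℝ, 0 ≤ c → obsLaw L (fun _ => c) {ω | Φ ω = true} ≤ ENNReal.ofReal α

/-- Uniform separation rate `ρ(Φ, S₁, β)` of a test over a class `S₁`. -/
def sepRate (L : ℝ) (Φ : Obs → Bool) (S₁ : Set (ℝ → ℝ)) (β : ℝ) : ℝ :=
  sInf {ρ : ℝ | 0 < ρ ∧ ∀ s ∈ S₁, ρ < sepDist s →
    obsLaw L s {ω | Φ ω = false} ≤ ENNReal.ofReal β}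

/-- Minimax separation rate `ρ̲_L(S₁, α, β)`: infimum of the uniform separation rates over all
level `α` tests. -/
def minimaxRate (L : ℝ) (S₁ : Set (ℝ → ℝ)) (α β : ℝ) : ℝ :=
  sInf {r : ℝ | ∃ Φ : Obs → Bool, IsTest Φ ∧ IsLevel L α Φ ∧ r = sepRate L Φ S₁ β}

noncomputable section

/-- `φ_{M,i}(x) = φ(Mx - i + 1)` for `i = 1,…,M` (here indexed by `i ∈ Fin M`, so the argument
is `Mx - i`), where `φ`, defined on `[0,1)`, is extended by `0` outside. -/
def scaledPhi (φ : ℝ → ℝ) (M : ℕ) (i : ℕ) (x : ℝ) : ℝ :=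
  Set.indicator (Set.Ico (0 : ℝ) 1) φ ((M : ℝ) * x - i)

/-- The finite set of alternatives
`S_{M,D,r} = { ρ 1_{[0,1]} + r √(M/D) Σ_{i=1}^M Δ_i ξ_i φ_{M,i} :
ξ ∈ {-1,+1}^M, Δ ∈ {0,1}^M, Σ_i Δ_i = D }`. -/
def SMDr (M D : ℕ) (ρ r : ℝ) (φ : ℝ → ℝ) : Set (ℝ → ℝ) :=
  {s | ∃ ξ Δ : Fin M → ℝ,
    (∀ i, ξ i = 1 ∨ ξ i = -1) ∧ (∀ i, Δ i = 0 ∨ Δ i = 1) ∧ (∑ i, Δ i = (D : ℝ)) ∧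
    s = fun x => ρ * Set.indicator (Set.Icc (0 : ℝ) 1) (fun _ => (1 : ℝ)) x
      + r * Real.sqrt ((M : ℝ) / D) * ∑ i : Fin M, Δ i * ξ i * scaledPhi φ M i x}

end

namespace NetAux

/-- dyadic interval `[m/2^ℓ, (m+1)/2^ℓ)` -/
def dy (ℓ m : ℕ) : Set ℝ := Ico ((m : ℝ) / 2 ^ ℓ) (((m : ℝ) + 1) / 2 ^ ℓ)

lemma measurableSet_dy (ℓ m : ℕ) : MeasurableSet (dy ℓ m) := measurableSet_Ico

lemma volume_dy (ℓ m : ℕ) : volume (dy ℓ m) = ENNReal.ofReal (((2:ℝ) ^ ℓ)⁻¹) := by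
  rw [dy, Real.volume_Ico]; congr 1; field_simp; ring

lemma dy_subset_unit {ℓ m : ℕ} (hm : m < 2 ^ ℓ) : dy ℓ m ⊆ Icc 0 1 := by
  intro x hx
  obtain ⟨h1, h2⟩ := hx
  have hp : (0:ℝ) < 2 ^ ℓ := by positivity
  have hm' : (m : ℝ) + 1 ≤ 2 ^ ℓ := by exact_mod_cast hm
  have l1 : (0:ℝ) ≤ (m : ℝ) / 2 ^ ℓ := by positivity
  have l2 : ((m : ℝ) + 1) / 2 ^ ℓ ≤ 1 := by rw [div_le_one hp]; exact hm'
  exact ⟨by linarith, by linarith⟩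

lemma dy_nest {ℓ L : ℕ} (h : ℓ ≤ L) (p : ℕ) : dy L p ⊆ dy ℓ (p / 2 ^ (L - ℓ)) := by
  set n := L - ℓ with hn
  set q := p / 2 ^ n with hq
  have e : 2 ^ n * q + p % 2 ^ n = p := Nat.div_add_mod p (2 ^ n)
  have hs : p % 2 ^ n < 2 ^ n := Nat.mod_lt _ (by positivity)
  have h1 : 2 ^ n * q ≤ p := by omega
  have h2 : p + 1 ≤ 2 ^ n * q + 2 ^ n := by omega
  have hL : (2:ℝ) ^ L = 2 ^ ℓ * 2 ^ n := by rw [← pow_add]; congr 1; omega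
  have hpl : (0:ℝ) < 2 ^ ℓ := by positivity
  have hpL : (0:ℝ) < 2 ^ L := by positivity
  have c1 : (2:ℝ) ^ n * q ≤ (p : ℝ) := by exact_mod_cast h1
  have c2 : ((p : ℝ)) + 1 ≤ 2 ^ n * q + 2 ^ n := by exact_mod_cast h2
  intro x hx
  obtain ⟨hx1, hx2⟩ := hx
  constructor
  · have : (q : ℝ) / 2 ^ ℓ ≤ (p : ℝ) / 2 ^ L := by
      rw [div_le_div_iff₀ hpl hpL, hL]; nlinarith
    linarith
  · have : ((p : ℝ) + 1) / 2 ^ L ≤ ((q : ℝ) + 1) / 2 ^ ℓ := by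
      rw [div_le_div_iff₀ hpL hpl, hL]; nlinarith
    linarith

lemma dy_disj {ℓ m m' : ℕ} (h : m ≠ m') : dy ℓ m ∩ dy ℓ m' = ∅ := by
  have key : ∀ a b : ℕ, a < b → dy ℓ a ∩ dy ℓ b = ∅ := by
    intro a b hab
    apply eq_empty_of_forall_notMem
    rintro x ⟨⟨_, h2⟩, ⟨h3, _⟩⟩
    have hpl : (0:ℝ) < 2 ^ ℓ := by positivity
    have hc : (a : ℝ) + 1 ≤ (b : ℝ) := by exact_mod_cast hab
    have : ((a : ℝ) + 1) / 2 ^ ℓ ≤ (b : ℝ) / 2 ^ ℓ := by gcongr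
    linarith
  rcases Nat.lt_or_ge m m' with hlt | hge
  · exact key m m' hlt
  · rw [inter_comm]; exact key m' m (by omega)

/-- Intersection of nested dyadic intervals. -/
lemma dy_inter {ℓ L : ℕ} (h : ℓ ≤ L) (m p : ℕ) :
    dy ℓ m ∩ dy L p = if m = p / 2 ^ (L - ℓ) then dy L p else ∅ := by
  split_ifs with hm
  · rw [inter_eq_self_of_subset_right]
    rw [hm]; exact dy_nest h p
  · apply eq_empty_of_forall_notMem
    rintro x ⟨hx1, hx2⟩
    have h1 := dy_nest h p hx2
    have h2 := dy_disj hm (ℓ := ℓ)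
    have : x ∈ dy ℓ m ∩ dy ℓ (p / 2 ^ (L - ℓ)) := ⟨hx1, h1⟩
    rw [h2] at this
    exact notMem_empty x this

/-- The key integral of a product of indicators of nested dyadic intervals. -/
lemma integral_dy_mul {ℓ L : ℕ} (h : ℓ ≤ L) (m p : ℕ) (hp : p < 2 ^ L) :
    ∫ x in Icc (0:ℝ) 1,
        (dy ℓ m).indicator (fun _ => (1:ℝ)) x * (dy L p).indicator (fun _ => (1:ℝ)) x
      = if m = p / 2 ^ (L - ℓ) then ((2:ℝ) ^ L)⁻¹ else 0 := by
  have hrw : ∀ x : ℝ, (dy ℓ m).indicator (fun _ => (1:ℝ)) x * (dy L p).indicator (fun _ => (1:ℝ)) x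
      = (dy ℓ m ∩ dy L p).indicator (fun _ => (1:ℝ)) x := by
    intro x
    rw [← Set.inter_indicator_mul]
    simp
  simp only [hrw]
  rw [setIntegral_indicator ((measurableSet_dy ℓ m).inter (measurableSet_dy L p))]
  rw [dy_inter h m p]
  split_ifs with hm
  · rw [inter_eq_self_of_subset_right (dy_subset_unit hp)]
    rw [setIntegral_const, measureReal_def, volume_dy, smul_eq_mul, mul_one, ENNReal.toReal_ofReal (by positivity)]
  · simp

/-- Integral of a single dyadic indicator. -/
lemma integral_dy {ℓ m : ℕ} (hm : m < 2 ^ ℓ) :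
    ∫ x in Icc (0:ℝ) 1, (dy ℓ m).indicator (fun _ => (1:ℝ)) x = ((2:ℝ) ^ ℓ)⁻¹ := by
  rw [setIntegral_indicator (measurableSet_dy ℓ m)]
  rw [inter_eq_self_of_subset_right (dy_subset_unit hm)]
  rw [setIntegral_const, measureReal_def, volume_dy, smul_eq_mul, mul_one, ENNReal.toReal_ofReal (by positivity)]


lemma indicator_affine (a b c d x : ℝ) (hc : 0 < c) :
    (Ico a b).indicator (fun _ => (1:ℝ)) (c * x - d)
      = (Ico ((a + d) / c) ((b + d) / c)).indicator (fun _ => (1:ℝ)) x := by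
  have hmem : (c * x - d ∈ Ico a b) ↔ (x ∈ Ico ((a + d) / c) ((b + d) / c)) := by
    simp only [mem_Ico, div_le_iff₀ hc, lt_div_iff₀ hc]
    constructor <;> rintro ⟨h1, h2⟩ <;> constructor <;> nlinarith
  by_cases h : c * x - d ∈ Ico a b
  · rw [indicator_of_mem h, indicator_of_mem (hmem.mp h)]
  · rw [indicator_of_notMem h, indicator_of_notMem (fun hh => h (hmem.mpr hh))]

lemma haarFn_eq (j k : ℕ) (x : ℝ) :
    haarFn j k x = (2:ℝ) ^ ((j : ℝ) / 2) *
      ((dy (j+1) (2*k)).indicator (fun _ => (1:ℝ)) x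
        - (dy (j+1) (2*k+1)).indicator (fun _ => (1:ℝ)) x) := by
  have hc : (0:ℝ) < 2 ^ j := by positivity
  rw [haarFn, haarPsi, indicator_affine _ _ _ _ _ hc, indicator_affine _ _ _ _ _ hc]
  congr 2 <;> · rw [dy]; congr 1 <;> push_cast <;> ring_nf <;> rw [pow_succ] <;> field_simp <;> ring

lemma measurable_haarPsi : Measurable haarPsi :=
  ((measurable_const.indicator measurableSet_Ico).sub
    (measurable_const.indicator measurableSet_Ico))

lemma measurable_haarFn (j k : ℕ) : Measurable (haarFn j k) := by
  apply Measurable.const_mul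
  exact measurable_haarPsi.comp ((measurable_const.mul measurable_id).sub measurable_const)

lemma abs_haarPsi_le (y : ℝ) : |haarPsi y| ≤ 1 := by
  rw [haarPsi]
  rcases le_or_gt 0 y with h0 | h0 <;>
  · simp only [indicator_apply, mem_Ico]
    split_ifs <;> simp_all <;> norm_num <;> linarith

lemma abs_haarFn_le (j k : ℕ) (x : ℝ) : |haarFn j k x| ≤ (2:ℝ) ^ ((j:ℝ)/2) := by
  rw [haarFn, abs_mul, abs_of_pos (Real.rpow_pos_of_pos two_pos _)]
  nth_rewrite 2 [← mul_one ((2:ℝ) ^ ((j:ℝ)/2))]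
  exact mul_le_mul_of_nonneg_left (abs_haarPsi_le _) (le_of_lt (Real.rpow_pos_of_pos two_pos _))

lemma integrable_ind (ℓ m : ℕ) :
    Integrable (fun x => (dy ℓ m).indicator (fun _ => (1:ℝ)) x) (volume.restrict (Icc (0:ℝ) 1)) :=
  (integrable_const (1:ℝ)).indicator (measurableSet_dy ℓ m)

lemma integrable_ind_mul (ℓ m L p : ℕ) :
    Integrable (fun x => (dy ℓ m).indicator (fun _ => (1:ℝ)) x
      * (dy L p).indicator (fun _ => (1:ℝ)) x) (volume.restrict (Icc (0:ℝ) 1)) := by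
  have hrw : ∀ x : ℝ, (dy ℓ m).indicator (fun _ => (1:ℝ)) x * (dy L p).indicator (fun _ => (1:ℝ)) x
      = (dy ℓ m ∩ dy L p).indicator (fun _ => (1:ℝ)) x := by
    intro x; rw [← Set.inter_indicator_mul]; simp
  simp only [hrw]
  exact (integrable_const (1:ℝ)).indicator ((measurableSet_dy ℓ m).inter (measurableSet_dy L p))

/-- integral of haarFn alone -/
lemma integral_haarFn {j k : ℕ} (hk : k < 2 ^ j) :
    ∫ x in Icc (0:ℝ) 1, haarFn j k x = 0 := by
  simp only [haarFn_eq]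
  rw [integral_const_mul, integral_sub (integrable_ind _ _) (integrable_ind _ _)]
  rw [integral_dy (by omega : 2*k < 2^(j+1)), integral_dy (by omega : 2*k+1 < 2^(j+1))]
  ring

lemma two_mul_succ_div (i m : ℕ) (hm : 0 < m) : (2 * i + 1) / (2 * m) = i / m := by
  have e : m * (i / m) + i % m = i := Nat.div_add_mod i m
  have hs : i % m < m := Nat.mod_lt _ hm
  set q := i / m
  have h1 : 2 * i + 1 = (2 * (i % m) + 1) + (2 * m) * q := by
    have h2 : (2 * m) * q = 2 * (m * q) := by ring
    omega
  rw [h1, Nat.add_mul_div_left _ _ (by omega : 0 < 2 * m),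
    Nat.div_eq_of_lt (by omega), Nat.zero_add]

lemma haar_ortho_le {j J k i : ℕ} (hjJ : j ≤ J) (hk : k < 2 ^ j) (hi : i < 2 ^ J) :
    ∫ x in Icc (0:ℝ) 1, haarFn j k x * haarFn J i x
      = if j = J ∧ k = i then 1 else 0 := by
  have hll : j + 1 ≤ J + 1 := by omega
  have h2i : 2 * i < 2 ^ (J + 1) := by omega
  have h2i1 : 2 * i + 1 < 2 ^ (J + 1) := by omega
  set e1 : ℝ → ℝ := fun x => (dy (j+1) (2*k)).indicator (fun _ => (1:ℝ)) x * (dy (J+1) (2*i)).indicator (fun _ => (1:ℝ)) x with he1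
  set e2 : ℝ → ℝ := fun x => (dy (j+1) (2*k)).indicator (fun _ => (1:ℝ)) x * (dy (J+1) (2*i+1)).indicator (fun _ => (1:ℝ)) x with he2
  set e3 : ℝ → ℝ := fun x => (dy (j+1) (2*k+1)).indicator (fun _ => (1:ℝ)) x * (dy (J+1) (2*i)).indicator (fun _ => (1:ℝ)) x with he3
  set e4 : ℝ → ℝ := fun x => (dy (j+1) (2*k+1)).indicator (fun _ => (1:ℝ)) x * (dy (J+1) (2*i+1)).indicator (fun _ => (1:ℝ)) x with he4
  have i1 : Integrable e1 (volume.restrict (Icc (0:ℝ) 1)) := integrable_ind_mul _ _ _ _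
  have i2 : Integrable e2 (volume.restrict (Icc (0:ℝ) 1)) := integrable_ind_mul _ _ _ _
  have i3 : Integrable e3 (volume.restrict (Icc (0:ℝ) 1)) := integrable_ind_mul _ _ _ _
  have i4 : Integrable e4 (volume.restrict (Icc (0:ℝ) 1)) := integrable_ind_mul _ _ _ _
  have hrw : ∀ x : ℝ, haarFn j k x * haarFn J i x
      = ((2:ℝ) ^ ((j:ℝ)/2) * (2:ℝ) ^ ((J:ℝ)/2)) *
        (e1 x - e2 x - (e3 x - e4 x)) := by
    intro x; rw [haarFn_eq, haarFn_eq, he1, he2, he3, he4]; ring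
  simp only [hrw]
  rw [integral_const_mul]
  have inner : (∫ x in Icc (0:ℝ) 1, (e1 x - e2 x - (e3 x - e4 x)))
      = (∫ x in Icc (0:ℝ) 1, e1 x) - (∫ x in Icc (0:ℝ) 1, e2 x)
        - ((∫ x in Icc (0:ℝ) 1, e3 x) - (∫ x in Icc (0:ℝ) 1, e4 x)) := by
    have hA : Integrable (fun x => e1 x - e2 x) (volume.restrict (Icc (0:ℝ) 1)) := i1.sub i2
    have hB : Integrable (fun x => e3 x - e4 x) (volume.restrict (Icc (0:ℝ) 1)) := i3.sub i4
    rw [integral_sub hA hB, integral_sub i1 i2, integral_sub i3 i4]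
  rw [inner, he1, he2, he3, he4]
  rw [integral_dy_mul hll _ _ h2i, integral_dy_mul hll _ _ h2i1,
    integral_dy_mul hll _ _ h2i, integral_dy_mul hll _ _ h2i1]
  have hn : (J + 1) - (j + 1) = J - j := by omega
  rw [hn]
  rcases Nat.lt_or_ge j J with hlt | hge
  · -- j < J : everything cancels
    have hq : (2 * i + 1) / 2 ^ (J - j) = (2 * i) / 2 ^ (J - j) := by
      obtain ⟨n, hn2⟩ : ∃ n, J - j = n + 1 := ⟨J - j - 1, by omega⟩
      rw [hn2, pow_succ, mul_comm ((2:ℕ)^n) 2]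
      rw [two_mul_succ_div i (2^n) (by positivity), Nat.mul_div_mul_left _ _ (by norm_num : 0 < 2)]
    rw [hq]
    have hne : ¬(j = J ∧ k = i) := by rintro ⟨ha, hb⟩; omega
    rw [if_neg hne]
    ring
  · -- j = J
    have hjJ2 : j = J := by omega
    subst hjJ2
    rw [Nat.sub_self, pow_zero]
    simp only [Nat.div_one]
    rcases eq_or_ne k i with hki | hki
    · subst hki
      rw [if_pos rfl, if_neg (by omega), if_neg (by omega), if_pos rfl]
      rw [if_pos (show True ∧ k = k from ⟨trivial, rfl⟩)]
      have h1 : (2:ℝ) ^ ((j:ℝ)/2) * (2:ℝ) ^ ((j:ℝ)/2) = (2:ℝ) ^ (j:ℕ) := by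
        rw [← Real.rpow_add two_pos]
        rw [show (j:ℝ)/2 + (j:ℝ)/2 = (j:ℝ) by ring, Real.rpow_natCast]
      rw [h1, pow_succ]
      have hp : (0:ℝ) < 2 ^ (j:ℕ) := by positivity
      field_simp
      norm_num
    · rw [if_neg (by omega), if_neg (by omega), if_neg (by omega), if_neg (by omega),
        if_neg (by rintro ⟨ha, hb⟩; exact hki hb)]
      ring

lemma haar_ortho {j J k i : ℕ} (hk : k < 2 ^ j) (hi : i < 2 ^ J) :
    ∫ x in Icc (0:ℝ) 1, haarFn j k x * haarFn J i x
      = if j = J ∧ k = i then 1 else 0 := by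
  rcases le_total j J with h | h
  · exact haar_ortho_le h hk hi
  · have h0 := haar_ortho_le h hi hk
    have hcomm : ∀ x : ℝ, haarFn j k x * haarFn J i x = haarFn J i x * haarFn j k x :=
      fun x => mul_comm _ _
    simp only [hcomm]
    rw [h0]
    congr 1
    rw [eq_iff_iff]
    constructor <;> rintro ⟨ha, hb⟩ <;> exact ⟨ha.symm, hb.symm⟩


lemma haarPsi_zero {y : ℝ} (hy : y ∉ Ico (0:ℝ) 1) : haarPsi y = 0 := by
  have h1 : y ∉ Ico (0:ℝ) (1/2) := by
    rintro ⟨ha, hb⟩; exact hy ⟨ha, by linarith⟩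
  have h2 : y ∉ Ico (1/2:ℝ) 1 := by
    rintro ⟨ha, hb⟩; exact hy ⟨by linarith, hb⟩
  rw [haarPsi, indicator_of_notMem h1, indicator_of_notMem h2, sub_zero]

lemma two_rpow_cancel (J : ℕ) : (2:ℝ) ^ (-((J:ℝ)/2)) * (2:ℝ) ^ ((J:ℝ)/2) = 1 := by
  rw [← Real.rpow_add two_pos, show -((J:ℝ)/2) + (J:ℝ)/2 = 0 by ring, Real.rpow_zero]

lemma scaledPhi_eq (J i : ℕ) (x : ℝ) :
    scaledPhi haarPsi (2 ^ J) i x = (2:ℝ) ^ (-((J:ℝ)/2)) * haarFn J i x := by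
  rw [scaledPhi, haarFn]
  have hcast : ((2 ^ J : ℕ) : ℝ) = (2:ℝ) ^ J := by push_cast; ring
  rw [hcast]
  by_cases h : (2:ℝ)^J * x - i ∈ Ico (0:ℝ) 1
  · rw [indicator_of_mem h, ← mul_assoc, two_rpow_cancel, one_mul]
  · rw [indicator_of_notMem h, haarPsi_zero h]; ring

lemma measurable_scaledPhi (J i : ℕ) : Measurable (scaledPhi haarPsi (2 ^ J) i) := by
  have h : scaledPhi haarPsi (2 ^ J) i = fun x => (2:ℝ) ^ (-((J:ℝ)/2)) * haarFn J i x :=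
    funext (scaledPhi_eq J i)
  rw [h]
  exact measurable_const.mul (measurable_haarFn J i)

lemma abs_scaledPhi_le (J i : ℕ) (x : ℝ) : |scaledPhi haarPsi (2 ^ J) i x| ≤ 1 := by
  rw [scaledPhi]
  by_cases h : ((2 ^ J : ℕ) : ℝ) * x - i ∈ Ico (0:ℝ) 1
  · rw [indicator_of_mem h]; exact abs_haarPsi_le _
  · rw [indicator_of_notMem h]; norm_num

lemma scaledPhi_support {J i : ℕ} {x : ℝ} (h : scaledPhi haarPsi (2 ^ J) i x ≠ 0) :
    (i:ℝ) ≤ ((2 ^ J : ℕ) : ℝ) * x ∧ ((2 ^ J : ℕ) : ℝ) * x < (i:ℝ) + 1 := by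
  rw [scaledPhi] at h
  by_cases hm : ((2 ^ J : ℕ) : ℝ) * x - i ∈ Ico (0:ℝ) 1
  · obtain ⟨h1, h2⟩ := hm
    constructor <;> linarith
  · rw [indicator_of_notMem hm] at h
    exact absurd rfl h

lemma integrable_bdd {f : ℝ → ℝ} (hm : Measurable f) {C : ℝ} (h : ∀ x, |f x| ≤ C) :
    Integrable f (volume.restrict (Icc (0:ℝ) 1)) :=
  memLp_one_iff_integrable.mp (MemLp.of_bound hm.aestronglyMeasurable C
    (Filter.Eventually.of_forall fun x => by rw [Real.norm_eq_abs]; exact h x))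

lemma integrable_mul_bdd {f g : ℝ → ℝ} (hf : Measurable f) (hg : Measurable g)
    {C C' : ℝ} (h : ∀ x, |f x| ≤ C) (h' : ∀ x, |g x| ≤ C') :
    Integrable (fun x => f x * g x) (volume.restrict (Icc (0:ℝ) 1)) := by
  refine integrable_bdd (hf.mul hg) (C := C * C') fun x => ?_
  rw [abs_mul]
  exact mul_le_mul (h x) (h' x) (abs_nonneg _) (le_trans (abs_nonneg _) (h x))

end NetAux

/-- The inclusion step in the proof of Theorem 1 of Fromont–Laurent–Reynaud-Bouret: with
`φ = ψ = 1_{[0,1/2)} - 1_{[1/2,1)}`, `M = 2^J` and `ρ = 1`, if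
`r² ≤ min(D/M, R² M^{-2δ}, R'^{2(1+2γ)} D^{-2γ})` then
`S_{M,D,r} ⊆ B^δ_{2,∞}(R) ∩ W_γ(R') ∩ L^∞(R'')` and every `s ∈ S_{M,D,r}` satisfies
`d(s, S₀) = r`. -/
theorem net_subset_besov_bodies (R R' R'' δ γ : ℝ) (hR : 0 < R) (hR' : 0 < R')
    (hR'' : 2 ≤ R'') (hδ : 0 < δ) (hγ : 0 < γ)
    (J : ℕ) (D : ℕ) (hD : 1 ≤ D) (hDM : D ≤ 2 ^ J) (r : ℝ) (hr : 0 < r)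
    (hr2 : r ^ 2 ≤ min ((D : ℝ) / 2 ^ J)
      (min (R ^ 2 * ((2 : ℝ) ^ J) ^ (-(2 * δ))) (R' ^ (2 * (1 + 2 * γ)) * (D : ℝ) ^ (-(2 * γ))))) :
    SMDr (2 ^ J) D 1 r haarPsi ⊆ besovBody δ R ∩ weakBesovBody γ R' ∩ linfBall R'' ∧
    ∀ s ∈ SMDr (2 ^ J) D 1 r haarPsi, sepDist s = r := by

  classical
  -- notation
  have hMpos : (0:ℝ) < ((2 ^ J : ℕ):ℝ) := by positivity
  have hDpos : (0:ℝ) < (D:ℝ) := by exact_mod_cast Nat.lt_of_lt_of_le Nat.zero_lt_one hD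
  have hMcast : ((2 ^ J : ℕ):ℝ) = (2:ℝ) ^ (J:ℕ) := by push_cast; ring
  -- the common part for every s in the net
  have main : ∀ s ∈ SMDr (2 ^ J) D 1 r haarPsi,
      (s ∈ besovBody δ R ∩ weakBesovBody γ R' ∩ linfBall R'') ∧ sepDist s = r := by
    rintro s ⟨ξ, Δ, hξ, hΔ, hsum, hs⟩
    set c : ℝ := r * Real.sqrt (((2 ^ J : ℕ):ℝ) / (D:ℝ)) with hcdef
    set T : ℝ → ℝ := fun x => ∑ i : Fin (2 ^ J), Δ i * ξ i * scaledPhi haarPsi (2 ^ J) i x with hTdef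
    have hsx : ∀ x, s x = Set.indicator (Set.Icc (0:ℝ) 1) (fun _ => (1:ℝ)) x + c * T x := by
      intro x; rw [hs]; ring
    have hc0 : 0 ≤ c := mul_nonneg hr.le (Real.sqrt_nonneg _)
    have hcsq : c ^ 2 = r ^ 2 * ((2:ℝ) ^ J / (D:ℝ)) := by
      rw [hcdef, mul_pow, Real.sq_sqrt (by positivity), hMcast]
    have hr2a := (le_min_iff.mp hr2).1
    have hr2b := (le_min_iff.mp (le_min_iff.mp hr2).2).1
    have hr2c := (le_min_iff.mp (le_min_iff.mp hr2).2).2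
    have hc1 : c ≤ 1 := by
      have hcs : c ^ 2 ≤ 1 := by
        rw [hcsq]
        have hstep2 : r ^ 2 * ((2:ℝ) ^ J/(D:ℝ)) ≤ ((D:ℝ)/(2:ℝ) ^ J) * ((2:ℝ) ^ J/(D:ℝ)) := by
          apply mul_le_mul_of_nonneg_right _ (by positivity)
          exact hr2a
        calc r ^ 2 * ((2:ℝ) ^ J/(D:ℝ)) ≤ ((D:ℝ)/(2:ℝ) ^ J) * ((2:ℝ) ^ J/(D:ℝ)) := hstep2
          _ = 1 := by
              have h2 : ((2:ℝ) ^ J) ≠ 0 := by positivity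
              field_simp
      nlinarith
    -- the sum of Δ i squared-with-sign facts
    have hΔsq : ∀ i, Δ i ^ 2 = Δ i := by
      intro i; rcases hΔ i with h | h <;> rw [h] <;> norm_num
    have hξsq : ∀ i, ξ i ^ 2 = 1 := by
      intro i; rcases hξ i with h | h <;> rw [h] <;> norm_num
    -- pointwise bound on T
    have hspabs : ∀ (i : Fin (2 ^ J)) x, |scaledPhi haarPsi (2 ^ J) i x| ≤ 1 := by
      intro i x; exact NetAux.abs_scaledPhi_le J i x
    have hT1 : ∀ x, |T x| ≤ 1 := by
      intro x
      by_cases hex : ∃ i : Fin (2 ^ J), scaledPhi haarPsi (2 ^ J) i x ≠ 0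
      · obtain ⟨i₀, hi₀⟩ := hex
        have hkey : ∀ i : Fin (2 ^ J), i ≠ i₀ → Δ i * ξ i * scaledPhi haarPsi (2 ^ J) i x = 0 := by
          intro i hne
          by_cases hz : scaledPhi haarPsi (2 ^ J) i x = 0
          · rw [hz]; ring
          · exfalso
            have h1 := NetAux.scaledPhi_support (J := J) (i := (i:ℕ)) (x := x) hz
            have h2 := NetAux.scaledPhi_support (J := J) (i := (i₀:ℕ)) (x := x) hi₀
            have e1 : ((i:ℕ):ℝ) < ((i₀:ℕ):ℝ) + 1 := lt_of_le_of_lt h1.1 h2.2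
            have e2 : ((i₀:ℕ):ℝ) < ((i:ℕ):ℝ) + 1 := lt_of_le_of_lt h2.1 h1.2
            have n1 : (i:ℕ) < (i₀:ℕ) + 1 := by exact_mod_cast e1
            have n2 : (i₀:ℕ) < (i:ℕ) + 1 := by exact_mod_cast e2
            exact hne (Fin.ext (by omega))
        rw [hTdef]
        beta_reduce
        rw [Finset.sum_eq_single i₀ (fun b _ hb => hkey b hb)
          (fun h => absurd (Finset.mem_univ i₀) h)]
        rw [abs_mul, abs_mul]
        have hΔ1 : |Δ i₀| ≤ 1 := by rcases hΔ i₀ with h | h <;> rw [h] <;> norm_num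
        have hξ1 : |ξ i₀| ≤ 1 := by rcases hξ i₀ with h | h <;> rw [h] <;> norm_num
        have := hspabs i₀ x
        have h0 : (0:ℝ) ≤ |Δ i₀| := abs_nonneg _
        have h0' : (0:ℝ) ≤ |ξ i₀| := abs_nonneg _
        have h0'' : (0:ℝ) ≤ |scaledPhi haarPsi (2 ^ J) (i₀:ℕ) x| := abs_nonneg _
        calc |Δ i₀| * |ξ i₀| * |scaledPhi haarPsi (2 ^ J) (i₀:ℕ) x| ≤ 1 * 1 * 1 := by
              apply mul_le_mul (mul_le_mul hΔ1 hξ1 h0' zero_le_one) this h0''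
              norm_num
          _ = 1 := by norm_num
      · push_neg at hex
        have : T x = 0 := by
          rw [hTdef]
          apply Finset.sum_eq_zero
          intro i _
          rw [hex i]; ring
        rw [this]; norm_num
    -- global bound on s
    have hsabs : ∀ x, |s x| ≤ 2 := by
      intro x
      rw [hsx x]
      have hind : |Set.indicator (Set.Icc (0:ℝ) 1) (fun _ => (1:ℝ)) x| ≤ 1 := by
        by_cases h : x ∈ Set.Icc (0:ℝ) 1
        · rw [Set.indicator_of_mem h]; norm_num
        · rw [Set.indicator_of_notMem h]; norm_num
      calc |Set.indicator (Set.Icc (0:ℝ) 1) (fun _ => (1:ℝ)) x + c * T x|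
          ≤ |Set.indicator (Set.Icc (0:ℝ) 1) (fun _ => (1:ℝ)) x| + |c * T x| := abs_add_le _ _
        _ ≤ 1 + 1 := by
            apply add_le_add hind
            rw [abs_mul, abs_of_nonneg hc0]
            calc c * |T x| ≤ 1 * 1 := by
                  apply mul_le_mul hc1 (hT1 x) (abs_nonneg _) zero_le_one
              _ = 1 := one_mul 1
        _ = 2 := by norm_num
    -- nonnegativity on [0,1]
    have hpos : ∀ x ∈ Set.Icc (0:ℝ) 1, 0 ≤ s x := by
      intro x hx
      rw [hsx x, Set.indicator_of_mem hx]
      have h1 : |c * T x| ≤ 1 := by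
        rw [abs_mul, abs_of_nonneg hc0]
        calc c * |T x| ≤ 1 * 1 :=
            mul_le_mul hc1 (hT1 x) (abs_nonneg _) zero_le_one
          _ = 1 := one_mul 1
      have := abs_le.mp h1
      linarith [this.1]
    -- measurability
    have hmeas : Measurable s := by
      rw [hs]
      apply Measurable.add
      · exact (measurable_const.indicator measurableSet_Icc).const_mul 1
      · apply Measurable.const_mul
        apply Finset.measurable_sum
        intro i _
        exact ((NetAux.measurable_scaledPhi J (i:ℕ)).const_mul _)
    have hmem2 : MemLp s 2 unif01 := by
      have : IsFiniteMeasure unif01 := by unfold unif01; infer_instance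
      exact MemLp.of_bound hmeas.aestronglyMeasurable 2
        (Filter.Eventually.of_forall fun x => by rw [Real.norm_eq_abs]; exact hsabs x)
    -- integrability facts over [0,1]
    have int_haar : ∀ j k : ℕ, Integrable (haarFn j k) (volume.restrict (Set.Icc (0:ℝ) 1)) :=
      fun j k => NetAux.integrable_bdd (NetAux.measurable_haarFn j k) (NetAux.abs_haarFn_le j k)
    have int_sp : ∀ i : Fin (2 ^ J), Integrable (scaledPhi haarPsi (2 ^ J) i) (volume.restrict (Set.Icc (0:ℝ) 1)) := by
      intro i
      exact NetAux.integrable_bdd (NetAux.measurable_scaledPhi J (i:ℕ)) (NetAux.abs_scaledPhi_le J (i:ℕ))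
    -- the scaled phi vs haar integral
    have int_sp_haar : ∀ (i : Fin (2 ^ J)) (j k : ℕ), k < 2 ^ j →
        ∫ x in Set.Icc (0:ℝ) 1, scaledPhi haarPsi (2 ^ J) i x * haarFn j k x
          = (2:ℝ) ^ (-((J:ℝ)/2)) * (if J = j ∧ (i:ℕ) = k then 1 else 0) := by
      intro i j k hk
      have hrw : ∀ x, scaledPhi haarPsi (2 ^ J) i x * haarFn j k x
          = (2:ℝ) ^ (-((J:ℝ)/2)) * (haarFn J (i:ℕ) x * haarFn j k x) := by
        intro x
        rw [NetAux.scaledPhi_eq J (i:ℕ) x]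
        ring
      simp only [hrw]
      rw [MeasureTheory.integral_const_mul]
      congr 1
      exact NetAux.haar_ortho (i.isLt) hk
    have int_sp_sp : ∀ (i i' : Fin (2 ^ J)),
        ∫ x in Set.Icc (0:ℝ) 1, scaledPhi haarPsi (2 ^ J) i x * scaledPhi haarPsi (2 ^ J) i' x
          = ((2:ℝ) ^ (J:ℕ))⁻¹ * (if i = i' then 1 else 0) := by
      intro i i'
      have hrw : ∀ x, scaledPhi haarPsi (2 ^ J) i x * scaledPhi haarPsi (2 ^ J) i' x
          = ((2:ℝ) ^ (-((J:ℝ)/2)) * (2:ℝ) ^ (-((J:ℝ)/2))) * (haarFn J (i:ℕ) x * haarFn J (i':ℕ) x) := by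
        intro x
        rw [NetAux.scaledPhi_eq J (i:ℕ) x, NetAux.scaledPhi_eq J (i':ℕ) x]
        ring
      simp only [hrw]
      rw [MeasureTheory.integral_const_mul]
      rw [NetAux.haar_ortho (i.isLt) (i'.isLt)]
      have hpw : (2:ℝ) ^ (-((J:ℝ)/2)) * (2:ℝ) ^ (-((J:ℝ)/2)) = ((2:ℝ) ^ (J:ℕ))⁻¹ := by
        rw [← Real.rpow_add two_pos, show -((J:ℝ)/2) + -((J:ℝ)/2) = -(J:ℝ) by ring,
          Real.rpow_neg (by norm_num), Real.rpow_natCast]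
      rw [hpw]
      by_cases h : i = i'
      · rw [if_pos (⟨rfl, by rw [h]⟩ : J = J ∧ (i:ℕ) = (i':ℕ)), if_pos h]
      · rw [if_neg (by rintro ⟨-, hh⟩; exact h (Fin.ext hh)), if_neg h]
    -- Haar coefficients of s
    have hcoeff : ∀ j k : ℕ, k < 2 ^ j →
        haarCoeff s j k = c * ((2:ℝ) ^ (-((J:ℝ)/2)) *
          ∑ i : Fin (2 ^ J), Δ i * ξ i * (if J = j ∧ (i:ℕ) = k then 1 else 0)) := by
      intro j k hk
      rw [haarCoeff]
      have hcongr : Set.EqOn (fun x => s x * haarFn j k x)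
          (fun x => haarFn j k x + c * (T x * haarFn j k x)) (Set.Icc (0:ℝ) 1) := by
        intro x hx
        simp only
        rw [hsx x, Set.indicator_of_mem hx]
        ring
      rw [setIntegral_congr_fun measurableSet_Icc hcongr]
      have intT : Integrable (fun x => T x * haarFn j k x) (volume.restrict (Set.Icc (0:ℝ) 1)) := by
        have hTm : Measurable T := by
          apply Finset.measurable_sum
          intro i _
          exact ((NetAux.measurable_scaledPhi J (i:ℕ)).const_mul _)
        exact NetAux.integrable_mul_bdd hTm (NetAux.measurable_haarFn j k) hT1 (NetAux.abs_haarFn_le j k)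
      rw [MeasureTheory.integral_add (int_haar j k) (intT.const_mul c)]
      rw [NetAux.integral_haarFn hk, zero_add, MeasureTheory.integral_const_mul]
      congr 1
      have hrw2 : ∀ x, T x * haarFn j k x
          = ∑ i : Fin (2 ^ J), (Δ i * ξ i) * (scaledPhi haarPsi (2 ^ J) i x * haarFn j k x) := by
        intro x
        rw [hTdef, Finset.sum_mul]
        apply Finset.sum_congr rfl
        intro i _
        ring
      simp only [hrw2]
      rw [MeasureTheory.integral_finset_sum]
      · rw [Finset.mul_sum]
        apply Finset.sum_congr rfl
        intro i _
        rw [MeasureTheory.integral_const_mul, int_sp_haar i j k hk]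
        ring
      · intro i _
        apply Integrable.const_mul
        have hspm : Measurable (scaledPhi haarPsi (2 ^ J) (i:ℕ)) :=
          NetAux.measurable_scaledPhi J (i:ℕ)
        exact NetAux.integrable_mul_bdd hspm (NetAux.measurable_haarFn j k)
          (hspabs i) (NetAux.abs_haarFn_le j k)
    -- coefficients away from level J vanish
    have hcoeff_ne : ∀ j k : ℕ, k < 2 ^ j → j ≠ J → haarCoeff s j k = 0 := by
      intro j k hk hne
      rw [hcoeff j k hk]
      have : ∀ i : Fin (2 ^ J), Δ i * ξ i * (if J = j ∧ (i:ℕ) = k then 1 else 0) = 0 := by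
        intro i
        rw [if_neg (by rintro ⟨h1, -⟩; exact hne h1.symm)]
        ring
      rw [Finset.sum_congr rfl (fun i _ => this i), Finset.sum_const, smul_zero]
      ring
    -- coefficients at level J
    have hcoeff_J : ∀ i₀ : Fin (2 ^ J), haarCoeff s J (i₀:ℕ) = c * (2:ℝ) ^ (-((J:ℝ)/2)) * (Δ i₀ * ξ i₀) := by
      intro i₀
      rw [hcoeff J (i₀:ℕ) i₀.isLt]
      have : ∑ i : Fin (2 ^ J), Δ i * ξ i * (if J = J ∧ (i:ℕ) = (i₀:ℕ) then 1 else 0) = Δ i₀ * ξ i₀ := by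
        rw [Finset.sum_eq_single i₀]
        · rw [if_pos ⟨rfl, rfl⟩]; ring
        · intro b _ hb
          rw [if_neg (by rintro ⟨-, h⟩; exact hb (Fin.ext h))]
          ring
        · intro h; exact absurd (Finset.mem_univ i₀) h
      rw [this]
      ring
    -- squared coefficient at level J
    have hcoeff_J_sq : ∀ i₀ : Fin (2 ^ J), (haarCoeff s J (i₀:ℕ)) ^ 2 = (r ^ 2 / (D:ℝ)) * Δ i₀ := by
      intro i₀
      rw [hcoeff_J i₀]
      have hpw : ((2:ℝ) ^ (-((J:ℝ)/2))) ^ 2 = ((2:ℝ) ^ (J:ℕ))⁻¹ := by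
        rw [sq, ← Real.rpow_add two_pos, show -((J:ℝ)/2) + -((J:ℝ)/2) = -(J:ℝ) by ring,
          Real.rpow_neg (by norm_num), Real.rpow_natCast]
      have : (c * (2:ℝ) ^ (-((J:ℝ)/2)) * (Δ i₀ * ξ i₀)) ^ 2
          = c ^ 2 * ((2:ℝ) ^ (-((J:ℝ)/2))) ^ 2 * (Δ i₀ ^ 2 * ξ i₀ ^ 2) := by ring
      rw [this, hpw, hΔsq, hξsq, mul_one, hcsq]
      have h2 : ((2:ℝ) ^ (J:ℕ)) ≠ 0 := by positivity
      field_simp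
    -- sum of squared coefficients at level J
    have hsum_sq : ∑ k ∈ Finset.range (2 ^ J), (haarCoeff s J k) ^ 2 = r ^ 2 := by
      rw [← Fin.sum_univ_eq_sum_range (fun k => (haarCoeff s J k) ^ 2) (2 ^ J)]
      have : ∀ i : Fin (2 ^ J), (haarCoeff s J (i:ℕ)) ^ 2 = (r ^ 2 / (D:ℝ)) * Δ i :=
        fun i => hcoeff_J_sq i
      rw [Finset.sum_congr rfl (fun i _ => this i), ← Finset.mul_sum, hsum]
      field_simp
    -- mean value
    have hmean : meanVal s = 1 := by
      rw [meanVal]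
      have hcongr : Set.EqOn s (fun x => 1 + c * T x) (Set.Icc (0:ℝ) 1) := by
        intro x hx
        rw [hsx x, Set.indicator_of_mem hx]
      rw [setIntegral_congr_fun measurableSet_Icc hcongr]
      have intT : Integrable T (volume.restrict (Set.Icc (0:ℝ) 1)) := by
        have hTm : Measurable T := by
          apply Finset.measurable_sum
          intro i _
          exact ((NetAux.measurable_scaledPhi J (i:ℕ)).const_mul _)
        exact NetAux.integrable_bdd hTm hT1
      rw [MeasureTheory.integral_add (integrable_const 1) (intT.const_mul c)]
      rw [MeasureTheory.integral_const_mul]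
      have h1 : ∫ (_ : ℝ) in Set.Icc (0:ℝ) 1, (1:ℝ) = 1 := by
        rw [setIntegral_const, measureReal_def, Real.volume_Icc]
        norm_num
      have h2 : ∫ x in Set.Icc (0:ℝ) 1, T x = 0 := by
        rw [hTdef, MeasureTheory.integral_finset_sum]
        · apply Finset.sum_eq_zero
          intro i _
          have hrw : ∀ x, Δ i * ξ i * scaledPhi haarPsi (2 ^ J) i x
              = (Δ i * ξ i * (2:ℝ) ^ (-((J:ℝ)/2))) * haarFn J (i:ℕ) x := by
            intro x; rw [NetAux.scaledPhi_eq J (i:ℕ) x]; ring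
          simp only [hrw]
          rw [MeasureTheory.integral_const_mul, NetAux.integral_haarFn i.isLt, mul_zero]
        · intro i _
          exact ((int_sp i).const_mul _)
      rw [h1, h2, mul_zero, add_zero]
    -- distance
    have hdist : distSqToConst s = r ^ 2 := by
      rw [distSqToConst, hmean]
      have hcongr : Set.EqOn (fun x => (s x - 1) ^ 2)
          (fun x => c ^ 2 * ∑ i : Fin (2 ^ J), ∑ i' : Fin (2 ^ J),
            (Δ i * ξ i * (Δ i' * ξ i')) * (scaledPhi haarPsi (2 ^ J) i x * scaledPhi haarPsi (2 ^ J) i' x))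
          (Set.Icc (0:ℝ) 1) := by
        intro x hx
        simp only
        rw [hsx x, Set.indicator_of_mem hx]
        have : (1 + c * T x - 1) ^ 2 = c ^ 2 * (T x * T x) := by ring
        rw [this]
        congr 1
        rw [hTdef, Finset.sum_mul_sum]
        apply Finset.sum_congr rfl
        intro i _
        apply Finset.sum_congr rfl
        intro i' _
        ring
      rw [setIntegral_congr_fun measurableSet_Icc hcongr]
      rw [MeasureTheory.integral_const_mul]
      have hintall : ∀ (i i' : Fin (2 ^ J)), Integrable
          (fun x => (Δ i * ξ i * (Δ i' * ξ i')) * (scaledPhi haarPsi (2 ^ J) i x * scaledPhi haarPsi (2 ^ J) i' x))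
          (volume.restrict (Set.Icc (0:ℝ) 1)) := by
        intro i i'
        apply Integrable.const_mul
        have hm1 : Measurable (scaledPhi haarPsi (2 ^ J) (i:ℕ)) :=
          NetAux.measurable_scaledPhi J (i:ℕ)
        have hm2 : Measurable (scaledPhi haarPsi (2 ^ J) (i':ℕ)) :=
          NetAux.measurable_scaledPhi J (i':ℕ)
        exact NetAux.integrable_mul_bdd hm1 hm2 (hspabs i) (hspabs i')
      rw [MeasureTheory.integral_finset_sum _ (fun i _ =>
        integrable_finset_sum _ (fun i' _ => hintall i i'))]
      have hinner : ∀ i : Fin (2 ^ J),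
          (∫ x in Set.Icc (0:ℝ) 1, ∑ i' : Fin (2 ^ J),
            (Δ i * ξ i * (Δ i' * ξ i')) * (scaledPhi haarPsi (2 ^ J) i x * scaledPhi haarPsi (2 ^ J) i' x))
          = ((2:ℝ) ^ (J:ℕ))⁻¹ * Δ i := by
        intro i
        rw [MeasureTheory.integral_finset_sum _ (fun i' _ => hintall i i')]
        have : ∀ i' : Fin (2 ^ J),
            (∫ x in Set.Icc (0:ℝ) 1,
              (Δ i * ξ i * (Δ i' * ξ i')) * (scaledPhi haarPsi (2 ^ J) i x * scaledPhi haarPsi (2 ^ J) i' x))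
            = (Δ i * ξ i * (Δ i' * ξ i')) * (((2:ℝ) ^ (J:ℕ))⁻¹ * (if i = i' then 1 else 0)) := by
          intro i'
          rw [MeasureTheory.integral_const_mul, int_sp_sp i i']
        rw [Finset.sum_congr rfl (fun i' _ => this i')]
        rw [Finset.sum_eq_single i]
        · rw [if_pos rfl]
          have e : Δ i * ξ i * (Δ i * ξ i) * (((2:ℝ) ^ J)⁻¹ * 1)
              = Δ i ^ 2 * ξ i ^ 2 * ((2:ℝ) ^ J)⁻¹ := by ring
          rw [e, hΔsq i, hξsq i, mul_one]
          ring
        · intro b _ hb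
          rw [if_neg (fun h => hb h.symm)]
          ring
        · intro h; exact absurd (Finset.mem_univ i) h
      rw [Finset.sum_congr rfl (fun i _ => hinner i), ← Finset.mul_sum, hsum]
      rw [hcsq]
      have h2 : ((2:ℝ) ^ (J:ℕ)) ≠ 0 := by positivity
      field_simp
    -- Besov membership
    have hbesov : s ∈ besovBody δ R := by
      refine ⟨hpos, hmem2, ?_⟩
      intro j
      rcases eq_or_ne j J with hj | hj
      · rw [hj, hsum_sq]
        calc r ^ 2 ≤ R ^ 2 * ((2:ℝ) ^ J) ^ (-(2 * δ)) := hr2b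
          _ = R ^ 2 * (2:ℝ) ^ (-(2 * (J:ℝ) * δ)) := by
              congr 1
              rw [← Real.rpow_natCast (2:ℝ) J, ← Real.rpow_mul (by norm_num)]
              congr 1
              ring
      · have hz : ∑ k ∈ Finset.range (2 ^ j), (haarCoeff s j k) ^ 2 = 0 := by
          apply Finset.sum_eq_zero
          intro k hk
          rw [hcoeff_ne j k (Finset.mem_range.mp hk) hj]
          norm_num
        rw [hz]
        positivity
    -- weak Besov membership
    have hweak : s ∈ weakBesovBody γ R' := by
      refine ⟨hpos, hmem2, ?_⟩
      intro t ht
      have hFne : ∀ j : ℕ, j ≠ J →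
          (∑ k ∈ Finset.range (2 ^ j),
            (if (haarCoeff s j k) ^ 2 ≤ t then (haarCoeff s j k) ^ 2 else 0)) = 0 := by
        intro j hj
        apply Finset.sum_eq_zero
        intro k hk
        rw [hcoeff_ne j k (Finset.mem_range.mp hk) hj]
        norm_num
      rw [tsum_eq_single J hFne]
      have hθpos : 0 < 2 * γ / (1 + 2 * γ) := by positivity
      rcases le_or_gt (r ^ 2 / (D:ℝ)) t with hcase | hcase
      · -- all terms kept
        have hterm : ∀ k ∈ Finset.range (2 ^ J),
            (if (haarCoeff s J k) ^ 2 ≤ t then (haarCoeff s J k) ^ 2 else 0)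
              = (haarCoeff s J k) ^ 2 := by
          intro k hk
          have hk' : k < 2 ^ J := Finset.mem_range.mp hk
          have hsq : (haarCoeff s J k) ^ 2 = (r ^ 2 / (D:ℝ)) * Δ ⟨k, hk'⟩ := hcoeff_J_sq ⟨k, hk'⟩
          have hP : (haarCoeff s J k) ^ 2 ≤ t := by
            rw [hsq]
            rcases hΔ ⟨k, hk'⟩ with h | h <;> rw [h]
            · rw [mul_zero]; linarith
            · rw [mul_one]; exact hcase
          rw [if_pos hP]
        rw [Finset.sum_congr rfl hterm, hsum_sq]
        -- now r^2 ≤ R'^2 * t^θ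
        have hd1 : (1:ℝ) ≤ (D:ℝ) := by exact_mod_cast hD
        have hθlt : 2 * γ / (1 + 2 * γ) < 1 := by
          rw [div_lt_one (by positivity)]; linarith
        have hkey : r ^ 2 ≤ R' ^ 2 * (r ^ 2 / (D:ℝ)) ^ (2 * γ / (1 + 2 * γ)) := by
          set θ : ℝ := 2 * γ / (1 + 2 * γ) with hθdef
          have hbase : (0:ℝ) < r ^ 2 / (D:ℝ) := by positivity
          have hstep : (r ^ 2) ^ ((1:ℝ) / (1 + 2 * γ))
              ≤ (R' ^ (2 * (1 + 2 * γ)) * (D:ℝ) ^ (-(2 * γ))) ^ ((1:ℝ) / (1 + 2 * γ)) :=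
            Real.rpow_le_rpow (by positivity) hr2c (by positivity)
          have hL : (r ^ 2) ^ ((1:ℝ) / (1 + 2 * γ)) = (r ^ 2) ^ ((1:ℝ) - θ) := by
            congr 1
            rw [hθdef]
            field_simp
            ring
          have hRHS : (R' ^ (2 * (1 + 2 * γ)) * (D:ℝ) ^ (-(2 * γ))) ^ ((1:ℝ) / (1 + 2 * γ))
              = R' ^ 2 * (D:ℝ) ^ (-θ) := by
            rw [Real.mul_rpow (by positivity) (by positivity)]
            rw [← Real.rpow_natCast R' 2]
            rw [← Real.rpow_mul hR'.le, ← Real.rpow_mul (by positivity : (0:ℝ) ≤ (D:ℝ))]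
            congr 1
            · congr 1
              push_cast
              field_simp
            · congr 1
              rw [hθdef]
              field_simp
          rw [hL, hRHS] at hstep
          -- multiply both sides by (r^2)^θ
          have hmul := mul_le_mul_of_nonneg_right hstep
            (Real.rpow_nonneg (by positivity : (0:ℝ) ≤ r ^ 2) θ)
          have hLL : (r ^ 2) ^ ((1:ℝ) - θ) * (r ^ 2) ^ θ = r ^ 2 := by
            rw [← Real.rpow_add (by positivity), sub_add_cancel, Real.rpow_one]
          have hRR : R' ^ 2 * (D:ℝ) ^ (-θ) * (r ^ 2) ^ θ
              = R' ^ 2 * (r ^ 2 / (D:ℝ)) ^ θ := by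
            rw [Real.div_rpow (by positivity) (by positivity : (0:ℝ) ≤ (D:ℝ))]
            rw [Real.rpow_neg (by positivity : (0:ℝ) ≤ (D:ℝ))]
            field_simp
          rw [hLL, hRR] at hmul
          exact hmul
        calc r ^ 2 ≤ R' ^ 2 * (r ^ 2 / (D:ℝ)) ^ (2 * γ / (1 + 2 * γ)) := hkey
          _ ≤ R' ^ 2 * t ^ (2 * γ / (1 + 2 * γ)) := by
              apply mul_le_mul_of_nonneg_left _ (by positivity)
              exact Real.rpow_le_rpow (by positivity) hcase hθpos.le
      · -- all nonzero terms dropped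
        have hterm : ∀ k ∈ Finset.range (2 ^ J),
            (if (haarCoeff s J k) ^ 2 ≤ t then (haarCoeff s J k) ^ 2 else 0) = 0 := by
          intro k hk
          have hk' : k < 2 ^ J := Finset.mem_range.mp hk
          have hsq : (haarCoeff s J k) ^ 2 = (r ^ 2 / (D:ℝ)) * Δ ⟨k, hk'⟩ := hcoeff_J_sq ⟨k, hk'⟩
          rcases hΔ ⟨k, hk'⟩ with h | h
          · rw [hsq, h, mul_zero]
            simp
          · rw [if_neg]
            rw [hsq, h, mul_one]
            exact not_le.mpr hcase
        rw [Finset.sum_congr rfl hterm, Finset.sum_const, smul_zero]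
        positivity
    -- L∞ membership
    have hlinf : s ∈ linfBall R'' := fun x _ => le_trans (hsabs x) hR''
    refine ⟨⟨⟨hbesov, hweak⟩, hlinf⟩, ?_⟩
    rw [sepDist, hdist]
    exact Real.sqrt_sq hr.le
  exact ⟨fun s hs => (main s hs).1, fun s hs => (main s hs).2⟩
end
end

section
/- For every γ > 0 there exists a constant C(γ) > 0 such that for every R' > 0 and every s ∈ W_γ(R') with Haar coefficients α_{(j,k)}: (a) for every t > 0, the number of pairs (j,k) ∈ Λ_∞ with |α_{(j,k)}| > t/2 is at most C(γ)·R'²·t^{−2/(1+2γ)}; and (b) for every integer D ≥ 1 there exists a subset Λ ⊂ Λ_∞ with |Λ| ≤ D such that Σ_{(j,k) ∈ Λ_∞ ∖ Λ} α_{(j,k)}² ≤ C(γ)·R'^{2+4γ}·D^{−2γ}. -/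
open MeasureTheory Filter Set
open scoped ENNReal

noncomputable section

namespace WBaux

lemma two_pow_pos (j : ℕ) : (0:ℝ) < 2 ^ j := by positivity

lemma haarPsi_eq (z : ℝ) :
    haarPsi z = (if 0 ≤ z ∧ z < 1/2 then (1:ℝ) else 0)
      - (if 1/2 ≤ z ∧ z < 1 then (1:ℝ) else 0) := by
  unfold haarPsi
  rw [Set.indicator_apply, Set.indicator_apply]
  simp [Set.mem_Ico]

lemma haarPsi_eq_zero {z : ℝ} (h : z < 0 ∨ 1 ≤ z) : haarPsi z = 0 := by
  rw [haarPsi_eq]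
  rcases h with h | h <;>
    · rw [if_neg, if_neg]
      · ring
      · rintro ⟨h1, h2⟩; linarith
      · rintro ⟨h1, h2⟩; linarith

lemma haarPsi_sq (z : ℝ) : haarPsi z ^ 2 = if 0 ≤ z ∧ z < 1 then (1:ℝ) else 0 := by
  rw [haarPsi_eq]
  by_cases h1 : 0 ≤ z ∧ z < 1/2
  · rw [if_pos h1, if_neg (by rintro ⟨ha, hb⟩; linarith [h1.2]), if_pos ⟨h1.1, by linarith [h1.2]⟩]
    ring
  · by_cases h2 : 1/2 ≤ z ∧ z < 1
    · rw [if_neg h1, if_pos h2, if_pos ⟨by linarith [h2.1], h2.2⟩]; ring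
    · rw [if_neg h1, if_neg h2, if_neg]
      · ring
      · push_neg at h1 h2
        rintro ⟨h0, hlt⟩
        exact absurd (h2 (h1 h0)) (not_le.2 hlt)

lemma abs_haarPsi_le (z : ℝ) : |haarPsi z| ≤ 1 := by
  rw [haarPsi_eq]; split_ifs <;> norm_num

lemma measurable_haarPsi : Measurable haarPsi := by
  unfold haarPsi
  exact (measurable_const.indicator measurableSet_Ico).sub
    (measurable_const.indicator measurableSet_Ico)

lemma measurable_haarFn (j k : ℕ) : Measurable (haarFn j k) := by
  unfold haarFn
  exact measurable_const.mul (measurable_haarPsi.comp (by fun_prop))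

instance : IsFiniteMeasure unif01 := by
  constructor
  rw [unif01, Measure.restrict_apply_univ, Real.volume_Icc]
  exact ENNReal.ofReal_lt_top

lemma memLp_haarFn (j k : ℕ) : MemLp (haarFn j k) 2 unif01 := by
  refine MemLp.of_bound (measurable_haarFn j k).aestronglyMeasurable ((2:ℝ)^((j:ℝ)/2))
    (ae_of_all _ fun x => ?_)
  rw [haarFn, Real.norm_eq_abs, abs_mul, abs_of_pos (Real.rpow_pos_of_pos two_pos _)]
  nlinarith [abs_haarPsi_le ((2:ℝ)^j * x - k), Real.rpow_pos_of_pos (show (0:ℝ) < 2 by norm_num) ((j:ℝ)/2)]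

lemma integrable_ind (a b : ℝ) :
    Integrable ((Ico a b).indicator (fun _ => (1:ℝ))) unif01 :=
  (integrable_const 1).indicator measurableSet_Ico

lemma integral_ind {a b : ℝ} (h0 : 0 ≤ a) (hab : a ≤ b) (h1 : b ≤ 1) :
    ∫ x, (Ico a b).indicator (fun _ => (1:ℝ)) x ∂unif01 = b - a := by
  have hsub : Ico a b ⊆ Icc 0 1 := by
    intro x hx
    rw [Set.mem_Ico] at hx
    exact Set.mem_Icc.mpr ⟨le_trans h0 hx.1, le_trans (le_of_lt hx.2) h1⟩
  rw [unif01, MeasureTheory.integral_indicator measurableSet_Ico,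
    Measure.restrict_restrict measurableSet_Ico,
    Set.inter_eq_left.mpr hsub,
    MeasureTheory.setIntegral_const, measureReal_def, Real.volume_Ico, smul_eq_mul, mul_one]
  exact ENNReal.toReal_ofReal (by linarith)

lemma haarFn_eq (j k : ℕ) (x : ℝ) :
    haarFn j k x = (2:ℝ)^((j:ℝ)/2) *
      ((Ico ((k:ℝ)/2^j) (((k:ℝ)+1/2)/2^j)).indicator (fun _ => (1:ℝ)) x
        - (Ico (((k:ℝ)+1/2)/2^j) (((k:ℝ)+1)/2^j)).indicator (fun _ => (1:ℝ)) x) := by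
  have hp := two_pow_pos j
  have m1 : ((2:ℝ)^j * x - k ∈ Ico (0:ℝ) (1/2)) ↔
      (x ∈ Ico ((k:ℝ)/2^j) (((k:ℝ)+1/2)/2^j)) := by
    rw [Set.mem_Ico, Set.mem_Ico, div_le_iff₀ hp, lt_div_iff₀ hp]
    constructor <;> rintro ⟨ha, hb⟩ <;> constructor <;> nlinarith
  have m2 : ((2:ℝ)^j * x - k ∈ Ico (1/2 : ℝ) 1) ↔
      (x ∈ Ico (((k:ℝ)+1/2)/2^j) (((k:ℝ)+1)/2^j)) := by
    rw [Set.mem_Ico, Set.mem_Ico, div_le_iff₀ hp, lt_div_iff₀ hp]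
    constructor <;> rintro ⟨ha, hb⟩ <;> constructor <;> nlinarith
  rw [haarFn, haarPsi, Set.indicator_apply, Set.indicator_apply, Set.indicator_apply,
    Set.indicator_apply, if_congr m1 rfl rfl, if_congr m2 rfl rfl]

lemma haarAmp_sq (j : ℕ) : ((2:ℝ)^((j:ℝ)/2))^2 = (2:ℝ)^j := by
  rw [← Real.rpow_natCast ((2:ℝ)^((j:ℝ)/2)) 2, ← Real.rpow_mul (by norm_num : (0:ℝ) ≤ 2)]
  push_cast
  rw [div_mul_cancel₀ _ (by norm_num : (2:ℝ) ≠ 0), Real.rpow_natCast]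

lemma haarFn_sq (j k : ℕ) (x : ℝ) :
    haarFn j k x ^ 2 = (2:ℝ)^j *
      (Ico ((k:ℝ)/2^j) (((k:ℝ)+1)/2^j)).indicator (fun _ => (1:ℝ)) x := by
  have hp := two_pow_pos j
  have m1 : ((0:ℝ) ≤ (2:ℝ)^j * x - k ∧ (2:ℝ)^j * x - k < 1) ↔
      (x ∈ Ico ((k:ℝ)/2^j) (((k:ℝ)+1)/2^j)) := by
    rw [Set.mem_Ico, div_le_iff₀ hp, lt_div_iff₀ hp]
    constructor <;> rintro ⟨ha, hb⟩ <;> constructor <;> nlinarith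
  rw [haarFn, mul_pow, haarAmp_sq, haarPsi_sq, Set.indicator_apply, if_congr m1 rfl rfl]

lemma bounds_of_lt {j k : ℕ} (hk : k < 2^j) :
    (0:ℝ) ≤ (k:ℝ)/2^j ∧ ((k:ℝ)+1)/2^j ≤ 1 := by
  have hp := two_pow_pos j
  have hk' : (k:ℝ) + 1 ≤ 2^j := by
    have : ((k+1 : ℕ) : ℝ) ≤ ((2^j : ℕ) : ℝ) := by exact_mod_cast Nat.succ_le_of_lt hk
    push_cast at this; linarith
  constructor
  · positivity
  · rw [div_le_one hp]; linarith

lemma integral_haarFn {j k : ℕ} (hk : k < 2^j) :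
    ∫ x, haarFn j k x ∂unif01 = 0 := by
  obtain ⟨hb0, hb1⟩ := bounds_of_lt hk
  have hp := two_pow_pos j
  have h1 : (k:ℝ)/2^j ≤ ((k:ℝ)+1/2)/2^j := by gcongr; linarith
  have h2 : ((k:ℝ)+1/2)/2^j ≤ ((k:ℝ)+1)/2^j := by gcongr; linarith
  simp only [haarFn_eq j k]
  rw [MeasureTheory.integral_const_mul _ _,
    MeasureTheory.integral_sub (integrable_ind _ _) (integrable_ind _ _),
    integral_ind hb0 h1 (le_trans h2 hb1), integral_ind (le_trans hb0 h1) h2 hb1]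
  ring

lemma integral_haarFn_sq {j k : ℕ} (hk : k < 2^j) :
    ∫ x, haarFn j k x ^ 2 ∂unif01 = 1 := by
  obtain ⟨hb0, hb1⟩ := bounds_of_lt hk
  have hp := two_pow_pos j
  simp only [haarFn_sq j k]
  rw [MeasureTheory.integral_const_mul _ _, integral_ind hb0 (by gcongr; linarith) hb1]
  field_simp
  ring


lemma haarPsi_support {z : ℝ} (h : haarPsi z ≠ 0) : 0 ≤ z ∧ z < 1 := by
  by_contra hc
  apply h
  apply haarPsi_eq_zero
  rcases lt_or_ge z 0 with h1 | h1
  · exact Or.inl h1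
  · rcases le_or_gt 1 z with h2 | h2
    · exact Or.inr h2
    · exact absurd ⟨h1, h2⟩ hc

lemma prod_zero_same (j : ℕ) {k k' : ℕ} (h : k ≠ k') (x : ℝ) :
    haarFn j k x * haarFn j k' x = 0 := by
  rcases eq_or_ne (haarPsi ((2:ℝ)^j * x - k)) 0 with h0 | h0
  · rw [haarFn, haarFn, h0]; ring
  · obtain ⟨h1, h2⟩ := haarPsi_support h0
    have hz : haarPsi ((2:ℝ)^j * x - k') = 0 := by
      apply haarPsi_eq_zero
      rcases lt_or_gt_of_ne h with hlt | hlt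
      · left
        have hcast : (k:ℝ) + 1 ≤ (k':ℝ) := by exact_mod_cast Nat.succ_le_of_lt hlt
        linarith
      · right
        have hcast : (k':ℝ) + 1 ≤ (k:ℝ) := by exact_mod_cast Nat.succ_le_of_lt hlt
        linarith
    rw [haarFn, haarFn, hz]; ring

lemma thresh_le {d k' : ℕ} (n : ℤ) {c y : ℝ} (hc : c = (n:ℝ) / 2^d)
    (hy1 : (k':ℝ)/2^d ≤ y) (hy2 : y < ((k':ℝ)+1)/2^d) : c ≤ y ↔ c ≤ (k':ℝ)/2^d := by
  have hp : (0:ℝ) < 2^d := by positivity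
  subst hc
  constructor
  · intro h
    have h2 : (n:ℝ) < (k':ℝ) + 1 := by
      have := lt_of_le_of_lt h hy2
      rw [div_lt_div_iff_of_pos_right hp] at this
      exact this
    have h3 : (n:ℝ) ≤ (k':ℝ) := by
      have : n < (k':ℤ) + 1 := by exact_mod_cast h2
      exact_mod_cast Int.lt_add_one_iff.mp this
    gcongr
  · intro h; exact le_trans h hy1

lemma thresh_lt {d k' : ℕ} (n : ℤ) {c y : ℝ} (hc : c = (n:ℝ) / 2^d)
    (hy1 : (k':ℝ)/2^d ≤ y) (hy2 : y < ((k':ℝ)+1)/2^d) : y < c ↔ (k':ℝ)/2^d < c := by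
  have hp : (0:ℝ) < 2^d := by positivity
  subst hc
  constructor
  · intro h; exact lt_of_le_of_lt hy1 h
  · intro h
    have h2 : (k':ℝ) < (n:ℝ) := by
      rw [div_lt_div_iff_of_pos_right hp] at h
      exact h
    have h3 : (k':ℝ) + 1 ≤ (n:ℝ) := by
      have h4 : (k':ℤ) + 1 ≤ n := Int.add_one_le_iff.mpr (by exact_mod_cast h2)
      have h5 : ((k':ℤ) + 1 : ℝ) ≤ ((n:ℤ) : ℝ) := by exact_mod_cast h4
      push_cast at h5
      linarith
    refine lt_of_lt_of_le hy2 ?_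
    gcongr

lemma haarPsi_const_on {j j' k k' : ℕ} (hjj : j < j') {x : ℝ}
    (hx1 : (k':ℝ)/2^j' ≤ x) (hx2 : x < ((k':ℝ)+1)/2^j') :
    haarPsi ((2:ℝ)^j * x - k) = haarPsi ((2:ℝ)^j * ((k':ℝ)/2^j') - k) := by
  set d := j' - j with hdd
  have hd1 : 1 ≤ d := by omega
  have hjd : j' = j + d := by omega
  have hpj : (0:ℝ) < 2^j := two_pow_pos j
  have hpd : (0:ℝ) < 2^d := two_pow_pos d
  set y := (2:ℝ)^j * x with hy
  set y0 := (2:ℝ)^j * ((k':ℝ)/2^j') with hy0def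
  have hsplit : (2:ℝ)^j' = 2^j * 2^d := by rw [hjd, pow_add]
  have hy0 : y0 = (k':ℝ)/2^d := by
    rw [hy0def, hsplit]
    field_simp
  have hy1 : (k':ℝ)/2^d ≤ y := by
    rw [← hy0, hy0def, hy]
    exact mul_le_mul_of_nonneg_left hx1 (le_of_lt hpj)
  have hy2 : y < ((k':ℝ)+1)/2^d := by
    have : (2:ℝ)^j * (((k':ℝ)+1)/2^j') = ((k':ℝ)+1)/2^d := by
      rw [hsplit]; field_simp
    rw [← this, hy]
    exact mul_lt_mul_of_pos_left hx2 hpj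
  have hd2 : (2:ℝ)^d = 2^(d-1) * 2 := by
    rw [← pow_succ]
    congr 1
    omega
  have c1 : (k:ℝ) = ((k * 2^d : ℤ) : ℝ) / 2^d := by push_cast; field_simp
  have c2 : 1/2 + (k:ℝ) = ((k * 2^d + 2^(d-1) : ℤ) : ℝ) / 2^d := by
    push_cast
    rw [hd2]
    field_simp
    ring
  have c3 : 1 + (k:ℝ) = (((k+1) * 2^d : ℤ) : ℝ) / 2^d := by push_cast; field_simp; ring
  have A1 : (0 ≤ y - k ∧ y - k < 1/2) ↔ (0 ≤ y0 - k ∧ y0 - k < 1/2) := by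
    rw [sub_nonneg, sub_nonneg, sub_lt_iff_lt_add, sub_lt_iff_lt_add, hy0]
    rw [thresh_le (k * 2^d) c1 hy1 hy2, thresh_lt (k * 2^d + 2^(d-1)) c2 hy1 hy2]
  have A2 : (1/2 ≤ y - k ∧ y - k < 1) ↔ (1/2 ≤ y0 - k ∧ y0 - k < 1) := by
    rw [le_sub_iff_add_le, le_sub_iff_add_le, sub_lt_iff_lt_add, sub_lt_iff_lt_add, hy0]
    rw [← thresh_le (k * 2^d + 2^(d-1)) c2 hy1 hy2, ← thresh_lt ((k+1) * 2^d) c3 hy1 hy2]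
  rw [haarPsi_eq, haarPsi_eq, if_congr A1 rfl rfl, if_congr A2 rfl rfl]

lemma integral_haar_mul_of_lt {j j' k k' : ℕ} (h : j < j') (hk' : k' < 2^j') :
    ∫ x, haarFn j k x * haarFn j' k' x ∂unif01 = 0 := by
  have hp : (0:ℝ) < 2^j' := two_pow_pos j'
  set ε := (2:ℝ)^((j:ℝ)/2) * haarPsi ((2:ℝ)^j * ((k':ℝ)/2^j') - k) with hε
  have key : ∀ x, haarFn j k x * haarFn j' k' x = ε * haarFn j' k' x := by
    intro x
    rcases eq_or_ne (haarPsi ((2:ℝ)^j' * x - k')) 0 with h0 | h0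
    · simp [haarFn, h0]
    · obtain ⟨hb1, hb2⟩ := haarPsi_support h0
      have hx1 : (k':ℝ)/2^j' ≤ x := by rw [div_le_iff₀ hp]; nlinarith
      have hx2 : x < ((k':ℝ)+1)/2^j' := by rw [lt_div_iff₀ hp]; nlinarith
      have heq : haarFn j k x = ε := by
        rw [haarFn, haarPsi_const_on h hx1 hx2, hε]
      rw [heq]
  simp only [key]
  rw [MeasureTheory.integral_const_mul _ _, integral_haarFn hk', mul_zero]

lemma haar_integral_mul (j k j' k' : ℕ) (hk : k < 2^j) (hk' : k' < 2^j') :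
    ∫ x, haarFn j k x * haarFn j' k' x ∂unif01
      = if (j,k) = (j',k') then 1 else 0 := by
  rcases lt_trichotomy j j' with h | h | h
  · rw [if_neg (by simp only [Prod.mk.injEq, not_and]; intro hj; omega)]
    exact integral_haar_mul_of_lt h hk'
  · subst h
    rcases eq_or_ne k k' with hkk | hkk
    · subst hkk
      rw [if_pos rfl]
      have : ∀ x : ℝ, haarFn j k x * haarFn j k x = haarFn j k x ^ 2 := fun x => (sq _).symm
      simp only [this]
      exact integral_haarFn_sq hk
    · rw [if_neg (by simp [hkk])]
      simp only [prod_zero_same j hkk]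
      exact integral_zero _ _
  · rw [if_neg (by simp only [Prod.mk.injEq, not_and]; intro hj; omega)]
    have : ∀ x : ℝ, haarFn j k x * haarFn j' k' x = haarFn j' k' x * haarFn j k x :=
      fun x => mul_comm _ _
    simp only [this]
    exact integral_haar_mul_of_lt h hk


abbrev Idx := {p : ℕ × ℕ // p.2 < 2 ^ p.1}

def haarLp (p : Idx) : Lp ℝ 2 unif01 := (memLp_haarFn p.1.1 p.1.2).toLp _

lemma orthonormal_haarLp : Orthonormal ℝ haarLp := by
  rw [orthonormal_iff_ite]
  intro p q
  rw [MeasureTheory.L2.inner_def]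
  have h1 : ∫ a, (inner ℝ (haarLp p a) (haarLp q a) : ℝ) ∂unif01
      = ∫ a, haarFn p.1.1 p.1.2 a * haarFn q.1.1 q.1.2 a ∂unif01 := by
    refine integral_congr_ae ?_
    filter_upwards [MemLp.coeFn_toLp (memLp_haarFn p.1.1 p.1.2),
      MemLp.coeFn_toLp (memLp_haarFn q.1.1 q.1.2)] with a ha hb
    rw [haarLp, haarLp, ha, hb, RCLike.inner_apply, conj_trivial, mul_comm]
  rw [h1, haar_integral_mul p.1.1 p.1.2 q.1.1 q.1.2 p.2 q.2]
  congr 1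
  simp [Subtype.ext_iff, Prod.ext_iff]

lemma inner_haarLp {s : ℝ → ℝ} (hs : MemLp s 2 unif01) (p : Idx) :
    (inner ℝ (hs.toLp s) (haarLp p) : ℝ) = haarCoeff s p.1.1 p.1.2 := by
  rw [MeasureTheory.L2.inner_def]
  have h1 : ∫ a, (inner ℝ ((hs.toLp s) a) (haarLp p a) : ℝ) ∂unif01
      = ∫ a, s a * haarFn p.1.1 p.1.2 a ∂unif01 := by
    refine integral_congr_ae ?_
    filter_upwards [MemLp.coeFn_toLp hs, MemLp.coeFn_toLp (memLp_haarFn p.1.1 p.1.2)]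
      with a ha hb
    rw [haarLp, ha, hb, RCLike.inner_apply, conj_trivial, mul_comm]
  rw [h1]
  rfl

lemma bessel {s : ℝ → ℝ} (hs : MemLp s 2 unif01) (S : Finset Idx) :
    ∑ p ∈ S, (haarCoeff s p.1.1 p.1.2) ^ 2 ≤ ‖hs.toLp s‖ ^ 2 := by
  have h := orthonormal_haarLp.sum_inner_products_le (s := S) (hs.toLp s)
  have h2 : ∀ p : Idx, ‖(inner ℝ (haarLp p) (hs.toLp s) : ℝ)‖ ^ 2
      = (haarCoeff s p.1.1 p.1.2) ^ 2 := by
    intro p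
    rw [real_inner_comm, inner_haarLp hs p, Real.norm_eq_abs, sq_abs]
  calc ∑ p ∈ S, (haarCoeff s p.1.1 p.1.2) ^ 2
      = ∑ p ∈ S, ‖(inner ℝ (haarLp p) (hs.toLp s) : ℝ)‖ ^ 2 := by
        refine Finset.sum_congr rfl fun p _ => (h2 p).symm
    _ ≤ ‖hs.toLp s‖ ^ 2 := h

lemma bessel' {s : ℝ → ℝ} (hs : MemLp s 2 unif01) (F : Finset (ℕ × ℕ))
    (hF : ∀ p ∈ F, p.2 < 2 ^ p.1) :
    ∑ p ∈ F, (haarCoeff s p.1 p.2) ^ 2 ≤ ‖hs.toLp s‖ ^ 2 := by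
  classical
  have key : ∑ p ∈ F, (haarCoeff s p.1 p.2) ^ 2
      = ∑ q ∈ F.attach.image (fun p => (⟨p.1, hF p.1 p.2⟩ : Idx)),
          (haarCoeff s q.1.1 q.1.2) ^ 2 := by
    rw [Finset.sum_image (by
      intro a _ b _ hab
      exact Subtype.ext (congrArg (Subtype.val : Idx → ℕ × ℕ) hab))]
    exact (Finset.sum_attach F fun p => (haarCoeff s p.1 p.2) ^ 2).symm
  rw [key]
  exact bessel hs _


/-! Combinatorial layer over abstract coefficients. -/

def gfun (a : ℕ → ℕ → ℝ) (T : ℝ) (j : ℕ) : ℝ :=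
  ∑ k ∈ Finset.range (2 ^ j), (if (a j k) ^ 2 ≤ T then (a j k) ^ 2 else 0)

lemma ite_sq_nonneg (a : ℕ → ℕ → ℝ) (T : ℝ) (j k : ℕ) :
    0 ≤ (if (a j k) ^ 2 ≤ T then (a j k) ^ 2 else 0) := by
  split_ifs
  · exact sq_nonneg _
  · exact le_refl 0

lemma gfun_nonneg (a : ℕ → ℕ → ℝ) (T : ℝ) (j : ℕ) : 0 ≤ gfun a T j :=
  Finset.sum_nonneg fun k _ => ite_sq_nonneg a T j k

lemma sum_biUnion_eq (J : Finset ℕ) (f : ℕ × ℕ → ℝ) :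
    ∑ p ∈ J.biUnion (fun j => (Finset.range (2 ^ j)).image (fun k => (j, k))), f p
      = ∑ j ∈ J, ∑ k ∈ Finset.range (2 ^ j), f (j, k) := by
  classical
  rw [Finset.sum_biUnion]
  · refine Finset.sum_congr rfl fun j _ => ?_
    rw [Finset.sum_image (by intro x _ y _ h; exact (Prod.mk.injEq _ _ _ _).mp h |>.2)]
  · intro x _ y _ hxy
    simp only [Finset.disjoint_left]
    intro p hp hq
    simp only [Finset.mem_image] at hp hq
    obtain ⟨k1, _, hk1⟩ := hp
    obtain ⟨k2, _, hk2⟩ := hq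
    exact hxy (((Prod.mk.injEq _ _ _ _).mp (by rw [← hk1] at hk2; exact hk2)).1).symm

section Abstract

variable {a : ℕ → ℕ → ℝ} {E : ℝ}

lemma sum_range_gfun_le
    (hE : ∀ F : Finset (ℕ × ℕ), (∀ p ∈ F, p.2 < 2 ^ p.1) → ∑ p ∈ F, (a p.1 p.2) ^ 2 ≤ E)
    (T : ℝ) (n : ℕ) : ∑ j ∈ Finset.range n, gfun a T j ≤ E := by
  have h1 : ∑ j ∈ Finset.range n, gfun a T j
      ≤ ∑ j ∈ Finset.range n, ∑ k ∈ Finset.range (2 ^ j), (a j k) ^ 2 := by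
    refine Finset.sum_le_sum fun j _ => Finset.sum_le_sum fun k _ => ?_
    split_ifs
    · exact le_refl _
    · exact sq_nonneg _
  refine le_trans h1 ?_
  rw [← sum_biUnion_eq (Finset.range n) (fun p => (a p.1 p.2) ^ 2)]
  refine hE _ ?_
  intro p hp
  simp only [Finset.mem_biUnion, Finset.mem_image] at hp
  obtain ⟨j, _, k, hk, hjk⟩ := hp
  rw [← hjk]
  simpa using Finset.mem_range.mp hk

lemma summable_gfun
    (hE : ∀ F : Finset (ℕ × ℕ), (∀ p ∈ F, p.2 < 2 ^ p.1) → ∑ p ∈ F, (a p.1 p.2) ^ 2 ≤ E)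
    (T : ℝ) : Summable (gfun a T) :=
  summable_of_sum_range_le (gfun_nonneg a T) (sum_range_gfun_le hE T)

lemma finsum_le_tsum
    (hE : ∀ F : Finset (ℕ × ℕ), (∀ p ∈ F, p.2 < 2 ^ p.1) → ∑ p ∈ F, (a p.1 p.2) ^ 2 ≤ E)
    (T : ℝ) (F : Finset (ℕ × ℕ)) (hF : ∀ p ∈ F, p.2 < 2 ^ p.1) :
    ∑ p ∈ F, (if (a p.1 p.2) ^ 2 ≤ T then (a p.1 p.2) ^ 2 else 0) ≤ ∑' j, gfun a T j := by
  classical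
  set J := F.image Prod.fst with hJ
  have hsub : F ⊆ J.biUnion (fun j => (Finset.range (2 ^ j)).image (fun k => (j, k))) := by
    intro p hp
    simp only [Finset.mem_biUnion, Finset.mem_image, hJ]
    exact ⟨p.1, ⟨p, hp, rfl⟩, p.2, Finset.mem_range.mpr (hF p hp), rfl⟩
  have h1 : ∑ p ∈ F, (if (a p.1 p.2) ^ 2 ≤ T then (a p.1 p.2) ^ 2 else 0)
      ≤ ∑ p ∈ J.biUnion (fun j => (Finset.range (2 ^ j)).image (fun k => (j, k))),
          (if (a p.1 p.2) ^ 2 ≤ T then (a p.1 p.2) ^ 2 else 0) :=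
    Finset.sum_le_sum_of_subset_of_nonneg hsub (fun p _ _ => ite_sq_nonneg a T p.1 p.2)
  refine le_trans h1 ?_
  rw [sum_biUnion_eq J (fun p => if (a p.1 p.2) ^ 2 ≤ T then (a p.1 p.2) ^ 2 else 0)]
  exact Summable.sum_le_tsum J (fun j _ => gfun_nonneg a T j) (summable_gfun hE T)

lemma card_bound {R' q : ℝ} (hR' : 0 < R') (hq1 : q < 1)
    (hE : ∀ F : Finset (ℕ × ℕ), (∀ p ∈ F, p.2 < 2 ^ p.1) → ∑ p ∈ F, (a p.1 p.2) ^ 2 ≤ E)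
    (hweak : ∀ T : ℝ, 0 < T → ∑' j, gfun a T j ≤ R' ^ 2 * T ^ q) :
    ∀ n : ℕ, ∀ u : ℝ, 0 < u → E ≤ 2 ^ n * u →
      ∀ F : Finset (ℕ × ℕ), (∀ p ∈ F, p.2 < 2 ^ p.1 ∧ u < (a p.1 p.2) ^ 2) →
      (F.card : ℝ) ≤ R' ^ 2 * (2:ℝ) ^ q / (1 - (2:ℝ) ^ (q - 1)) * u ^ (q - 1) := by
  have hδ : (0:ℝ) < 1 - (2:ℝ) ^ (q - 1) := by
    have := Real.rpow_lt_one_of_one_lt_of_neg (x := 2) (by norm_num) (by linarith : q - 1 < 0)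
    linarith
  intro n
  induction n with
  | zero =>
    intro u hu hEu F hF
    have : F = ∅ := by
      refine Finset.eq_empty_of_forall_notMem fun p hp => ?_
      have h1 := (hF p hp).2
      have h2 : (a p.1 p.2) ^ 2 ≤ E := by
        have := hE {p} (by intro x hx; rw [Finset.mem_singleton] at hx; rw [hx]; exact (hF p hp).1)
        simpa using this
      have h3 : E ≤ u := by rw [pow_zero, one_mul] at hEu; exact hEu
      linarith
    rw [this]
    simp only [Finset.card_empty, Nat.cast_zero]
    have : (0:ℝ) < R' ^ 2 * (2:ℝ) ^ q / (1 - (2:ℝ) ^ (q - 1)) * u ^ (q - 1) := by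
      apply mul_pos (div_pos (by positivity) hδ) (Real.rpow_pos_of_pos hu _)
    linarith
  | succ n ih =>
    intro u hu hEu F hF
    classical
    set F₁ := F.filter (fun p => (a p.1 p.2) ^ 2 ≤ 2 * u) with hF₁
    set F₂ := F.filter (fun p => ¬ ((a p.1 p.2) ^ 2 ≤ 2 * u)) with hF₂
    have hcard : F₁.card + F₂.card = F.card :=
      Finset.card_filter_add_card_filter_not _
    have hu2 : (0:ℝ) < 2 * u := by linarith
    -- bound for F₁
    have hb1 : u * (F₁.card : ℝ) ≤ R' ^ 2 * (2 * u) ^ q := by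
      have hlow : ∀ p ∈ F₁, u ≤ (if (a p.1 p.2) ^ 2 ≤ 2 * u then (a p.1 p.2) ^ 2 else 0) := by
        intro p hp
        rw [Finset.mem_filter] at hp
        rw [if_pos hp.2]
        exact le_of_lt (hF p hp.1).2
      have h1 := Finset.card_nsmul_le_sum F₁ _ u hlow
      rw [nsmul_eq_mul] at h1
      have h2 := finsum_le_tsum hE (2 * u) F₁
        (fun p hp => (hF p (Finset.mem_filter.mp hp).1).1)
      have h3 := hweak (2 * u) hu2
      calc u * (F₁.card : ℝ) = (F₁.card : ℝ) * u := by ring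
        _ ≤ R' ^ 2 * (2 * u) ^ q := le_trans h1 (le_trans h2 h3)
    have hb1' : (F₁.card : ℝ) ≤ R' ^ 2 * (2:ℝ) ^ q * u ^ (q - 1) := by
      have hmul : (2 * u) ^ q = (2:ℝ) ^ q * u ^ q :=
        Real.mul_rpow (by norm_num) (le_of_lt hu)
      have hdiv : u ^ (q - 1) = u ^ q / u := by
        rw [Real.rpow_sub hu, Real.rpow_one]
      have h4 : (F₁.card : ℝ) ≤ R' ^ 2 * (2 * u) ^ q / u := by
        rw [le_div_iff₀ hu]
        calc (F₁.card : ℝ) * u = u * (F₁.card : ℝ) := by ring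
          _ ≤ R' ^ 2 * (2 * u) ^ q := hb1
      calc (F₁.card : ℝ) ≤ R' ^ 2 * (2 * u) ^ q / u := h4
        _ = R' ^ 2 * (2:ℝ) ^ q * (u ^ q / u) := by rw [hmul]; ring
        _ = R' ^ 2 * (2:ℝ) ^ q * u ^ (q - 1) := by rw [← hdiv]
    -- bound for F₂
    have hb2 : (F₂.card : ℝ) ≤ R' ^ 2 * (2:ℝ) ^ q / (1 - (2:ℝ) ^ (q - 1))
        * ((2:ℝ) ^ (q-1) * u ^ (q - 1)) := by
      have hEu2 : E ≤ 2 ^ n * (2 * u) := by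
        rw [pow_succ] at hEu
        linarith [hEu]
      have := ih (2 * u) hu2 hEu2 F₂ (by
        intro p hp
        rw [hF₂, Finset.mem_filter] at hp
        exact ⟨(hF p hp.1).1, lt_of_not_ge hp.2⟩)
      refine le_trans this (le_of_eq ?_)
      rw [Real.mul_rpow (by norm_num) (le_of_lt hu)]
    have halg : R' ^ 2 * (2:ℝ) ^ q
        + R' ^ 2 * (2:ℝ) ^ q / (1 - (2:ℝ) ^ (q - 1)) * (2:ℝ) ^ (q-1)
        = R' ^ 2 * (2:ℝ) ^ q / (1 - (2:ℝ) ^ (q - 1)) := by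
      field_simp
      ring
    have hup : (0:ℝ) < u ^ (q-1) := Real.rpow_pos_of_pos hu _
    calc (F.card : ℝ) = (F₁.card : ℝ) + (F₂.card : ℝ) := by
          rw [← hcard]; push_cast; ring
      _ ≤ R' ^ 2 * (2:ℝ) ^ q * u ^ (q - 1)
          + R' ^ 2 * (2:ℝ) ^ q / (1 - (2:ℝ) ^ (q - 1)) * ((2:ℝ) ^ (q-1) * u ^ (q - 1)) := by
          linarith
      _ = (R' ^ 2 * (2:ℝ) ^ q
          + R' ^ 2 * (2:ℝ) ^ q / (1 - (2:ℝ) ^ (q - 1)) * (2:ℝ) ^ (q-1)) * u ^ (q-1) := by ring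
      _ = R' ^ 2 * (2:ℝ) ^ q / (1 - (2:ℝ) ^ (q - 1)) * u ^ (q - 1) := by rw [halg]

end Abstract

end WBaux

/-- Coefficient-counting and nonlinear-approximation properties of the weak Besov body
`W_γ(R')` (used in the proof of Proposition 2 of Fromont–Laurent–Reynaud-Bouret):
(a) at most `C(γ) R'² t^{-2/(1+2γ)}` Haar coefficients satisfy `|α_{(j,k)}| > t/2`;
(b) for every `D ≥ 1` some set `Λ` of at most `D` indices captures all but
`C(γ) R'^{2+4γ} D^{-2γ}` of the energy `Σ α²`. -/


theorem weak_besov_coefficient_bounds (γ : ℝ) (hγ : 0 < γ) :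
    ∃ C : ℝ, 0 < C ∧ ∀ R' : ℝ, 0 < R' → ∀ s ∈ weakBesovBody γ R',
      (∀ t : ℝ, 0 < t → ∀ F : Finset (ℕ × ℕ),
        (∀ p ∈ F, p.2 < 2 ^ p.1 ∧ t / 2 < |haarCoeff s p.1 p.2|) →
        (F.card : ℝ) ≤ C * R' ^ 2 * t ^ (-(2 / (1 + 2 * γ)))) ∧
      (∀ D : ℕ, 1 ≤ D → ∃ Λ : Finset (ℕ × ℕ),
        (∀ p ∈ Λ, p.2 < 2 ^ p.1) ∧ Λ.card ≤ D ∧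
        ∑' j : ℕ, ∑ k ∈ Finset.range (2 ^ j),
            (if (j, k) ∈ Λ then 0 else (haarCoeff s j k) ^ 2)
          ≤ C * R' ^ (2 + 4 * γ) * (D : ℝ) ^ (-(2 * γ))) := by
  classical
  have h1γ : (0:ℝ) < 1 + 2 * γ := by linarith
  set q : ℝ := 2 * γ / (1 + 2 * γ) with hq_def
  have hq0 : 0 < q := by positivity
  have hq1 : q < 1 := by rw [hq_def, div_lt_one h1γ]; linarith
  have hδ : (0:ℝ) < 1 - (2:ℝ) ^ (q - 1) := by
    have := Real.rpow_lt_one_of_one_lt_of_neg (x := 2) (by norm_num) (by linarith : q - 1 < 0)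
    linarith
  set C₀ : ℝ := (2:ℝ) ^ q * (4:ℝ) ^ (1 - q) / (1 - (2:ℝ) ^ (q - 1)) with hC₀_def
  have hC₀ : 0 < C₀ := by
    refine div_pos (mul_pos ?_ ?_) hδ
    · exact Real.rpow_pos_of_pos (by norm_num) _
    · exact Real.rpow_pos_of_pos (by norm_num) _
  refine ⟨max C₀ (C₀ ^ (2 * γ)), lt_of_lt_of_le hC₀ (le_max_left _ _), ?_⟩
  intro R' hR' s hs
  obtain ⟨hpos, hs2, h3⟩ := hs
  set E : ℝ := ‖hs2.toLp s‖ ^ 2 with hE_def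
  have hE : ∀ F : Finset (ℕ × ℕ), (∀ p ∈ F, p.2 < 2 ^ p.1) →
      ∑ p ∈ F, (haarCoeff s p.1 p.2) ^ 2 ≤ E := fun F hF => WBaux.bessel' hs2 F hF
  have hweak : ∀ T : ℝ, 0 < T → ∑' j, WBaux.gfun (haarCoeff s) T j ≤ R' ^ 2 * T ^ q :=
    fun T hT => h3 T hT
  -- Part (a) with constant C₀
  have partA : ∀ t : ℝ, 0 < t → ∀ F : Finset (ℕ × ℕ),
      (∀ p ∈ F, p.2 < 2 ^ p.1 ∧ t / 2 < |haarCoeff s p.1 p.2|) →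
      (F.card : ℝ) ≤ C₀ * R' ^ 2 * t ^ (-(2 / (1 + 2 * γ))) := by
    intro t ht F hF
    have hu : (0:ℝ) < t ^ 2 / 4 := by positivity
    obtain ⟨n, hn⟩ := pow_unbounded_of_one_lt (E / (t ^ 2 / 4)) (by norm_num : (1:ℝ) < 2)
    have hEu : E ≤ 2 ^ n * (t ^ 2 / 4) := by
      rw [div_lt_iff₀ hu] at hn
      linarith
    have hF' : ∀ p ∈ F, p.2 < 2 ^ p.1 ∧ t ^ 2 / 4 < (haarCoeff s p.1 p.2) ^ 2 := by
      intro p hp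
      refine ⟨(hF p hp).1, ?_⟩
      have h1 := (hF p hp).2
      nlinarith [sq_abs (haarCoeff s p.1 p.2), abs_nonneg (haarCoeff s p.1 p.2)]
    have hcard := WBaux.card_bound hR' hq1 hE hweak n (t ^ 2 / 4) hu hEu F hF'
    refine le_trans hcard (le_of_eq ?_)
    have e1 : (t ^ 2 / 4 : ℝ) ^ (q - 1) = (4:ℝ) ^ (1 - q) * t ^ (-(2 / (1 + 2 * γ))) := by
      rw [Real.div_rpow (by positivity) (by norm_num)]
      rw [← Real.rpow_natCast t 2, ← Real.rpow_mul (le_of_lt ht)]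
      have h2 : ((2:ℕ):ℝ) * (q - 1) = -(2 / (1 + 2 * γ)) := by
        rw [hq_def]
        push_cast
        field_simp
        ring
      rw [h2]
      rw [div_eq_mul_inv, ← Real.rpow_neg (by norm_num : (0:ℝ) ≤ 4), neg_sub]
      ring
    rw [e1, hC₀_def]
    field_simp
  refine ⟨fun t ht F hF => ?_, ?_⟩
  · refine le_trans (partA t ht F hF) ?_
    have hpos' : (0:ℝ) ≤ R' ^ 2 * t ^ (-(2 / (1 + 2 * γ))) := by positivity
    calc C₀ * R' ^ 2 * t ^ (-(2 / (1 + 2 * γ)))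
        = C₀ * (R' ^ 2 * t ^ (-(2 / (1 + 2 * γ)))) := by ring
      _ ≤ max C₀ (C₀ ^ (2 * γ)) * (R' ^ 2 * t ^ (-(2 / (1 + 2 * γ)))) :=
          mul_le_mul_of_nonneg_right (le_max_left _ _) hpos'
      _ = max C₀ (C₀ ^ (2 * γ)) * R' ^ 2 * t ^ (-(2 / (1 + 2 * γ))) := by ring
  -- Part (b)
  intro D hD
  have hDpos : (0:ℝ) < (D:ℝ) := by exact_mod_cast Nat.lt_of_lt_of_le Nat.zero_lt_one hD
  have hbase : (0:ℝ) < C₀ * R' ^ 2 / (D:ℝ) := by positivity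
  set τ : ℝ := (C₀ * R' ^ 2 / (D:ℝ)) ^ ((1 + 2 * γ) / 2) with hτ_def
  have hτ : 0 < τ := Real.rpow_pos_of_pos hbase _
  have hDeq : C₀ * R' ^ 2 * τ ^ (-(2 / (1 + 2 * γ))) = (D:ℝ) := by
    rw [hτ_def, ← Real.rpow_mul (le_of_lt hbase)]
    have he : (1 + 2 * γ) / 2 * (-(2 / (1 + 2 * γ))) = -1 := by
      field_simp
    rw [he, Real.rpow_neg_one]
    field_simp
  set 𝒮 : Set (ℕ × ℕ) := {p | p.2 < 2 ^ p.1 ∧ τ / 2 < |haarCoeff s p.1 p.2|} with h𝒮_def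
  have hbnd : ∀ F : Finset (ℕ × ℕ), ↑F ⊆ 𝒮 → (F.card : ℝ) ≤ (D:ℝ) := by
    intro F hFs
    have := partA τ hτ F (fun p hp => hFs hp)
    rwa [hDeq] at this
  have hfin : 𝒮.Finite := by
    by_contra hinf
    obtain ⟨F, hFs, hFc⟩ := Set.Infinite.exists_subset_card_eq hinf (D + 1)
    have h1 := hbnd F hFs
    rw [hFc] at h1
    push_cast at h1
    linarith
  refine ⟨hfin.toFinset, ?_, ?_, ?_⟩
  · intro p hp
    rw [Set.Finite.mem_toFinset] at hp
    exact hp.1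
  · have h1 := hbnd hfin.toFinset (by simp)
    exact_mod_cast h1
  · have hterm : ∀ j : ℕ, ∀ k ∈ Finset.range (2 ^ j),
        (if (j, k) ∈ hfin.toFinset then 0 else (haarCoeff s j k) ^ 2)
          ≤ (if (haarCoeff s j k) ^ 2 ≤ τ ^ 2 then (haarCoeff s j k) ^ 2 else 0) := by
      intro j k hk
      by_cases hm : (j, k) ∈ hfin.toFinset
      · rw [if_pos hm]
        exact WBaux.ite_sq_nonneg (haarCoeff s) (τ ^ 2) j k
      · have hnot : (j, k) ∉ 𝒮 := fun h => hm (Set.Finite.mem_toFinset hfin |>.mpr h)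
        have hk' : k < 2 ^ j := Finset.mem_range.mp hk
        have habs : |haarCoeff s j k| ≤ τ / 2 := by
          by_contra hgt
          push_neg at hgt
          exact hnot ⟨hk', hgt⟩
        have hle : haarCoeff s j k ^ 2 ≤ τ ^ 2 := by
          nlinarith [sq_abs (haarCoeff s j k), abs_nonneg (haarCoeff s j k)]
        rw [if_neg hm, if_pos hle]
    have hinner : ∀ j : ℕ,
        (∑ k ∈ Finset.range (2 ^ j), (if (j, k) ∈ hfin.toFinset then 0 else (haarCoeff s j k) ^ 2))
          ≤ WBaux.gfun (haarCoeff s) (τ ^ 2) j :=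
      fun j => Finset.sum_le_sum (hterm j)
    have hnn : ∀ j : ℕ, 0 ≤
        ∑ k ∈ Finset.range (2 ^ j), (if (j, k) ∈ hfin.toFinset then 0 else (haarCoeff s j k) ^ 2) := by
      intro j
      refine Finset.sum_nonneg fun k _ => ?_
      split_ifs
      · exact le_refl 0
      · exact sq_nonneg _
    have hsum2 := WBaux.summable_gfun hE (τ ^ 2)
    have hsum1 : Summable (fun j : ℕ =>
        ∑ k ∈ Finset.range (2 ^ j), (if (j, k) ∈ hfin.toFinset then 0 else (haarCoeff s j k) ^ 2)) :=
      Summable.of_nonneg_of_le hnn hinner hsum2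
    have hfinal : (∑' j : ℕ, ∑ k ∈ Finset.range (2 ^ j),
        (if (j, k) ∈ hfin.toFinset then 0 else (haarCoeff s j k) ^ 2))
          ≤ R' ^ 2 * (τ ^ 2) ^ q :=
      le_trans (Summable.tsum_le_tsum hinner hsum1 hsum2) (hweak (τ ^ 2) (by positivity))
    refine le_trans hfinal ?_
    have hτsq : (τ:ℝ) ^ 2 = (C₀ * R' ^ 2 / (D:ℝ)) ^ ((1:ℝ) + 2 * γ) := by
      rw [hτ_def, ← Real.rpow_natCast ((C₀ * R' ^ 2 / (D:ℝ)) ^ ((1 + 2 * γ) / 2)) 2,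
        ← Real.rpow_mul (le_of_lt hbase)]
      norm_num
    have h5 : ((τ:ℝ) ^ 2) ^ q = (C₀ * R' ^ 2 / (D:ℝ)) ^ (2 * γ) := by
      rw [hτsq, ← Real.rpow_mul (le_of_lt hbase)]
      congr 1
      rw [hq_def]
      field_simp
    have h6 : (C₀ * R' ^ 2 / (D:ℝ)) ^ (2 * γ)
        = C₀ ^ (2 * γ) * (R' ^ 2 : ℝ) ^ (2 * γ) * (D:ℝ) ^ (-(2 * γ)) := by
      rw [Real.div_rpow (by positivity) (le_of_lt hDpos),
        Real.mul_rpow (le_of_lt hC₀) (by positivity),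
        Real.rpow_neg (le_of_lt hDpos), div_eq_mul_inv]
    have h7 : R' ^ 2 * ((R' ^ 2 : ℝ) ^ (2 * γ)) = R' ^ ((2:ℝ) + 4 * γ) := by
      rw [← Real.rpow_natCast R' 2, ← Real.rpow_mul (le_of_lt hR'), ← Real.rpow_add hR']
      congr 1
      push_cast
      ring
    have h8 : R' ^ 2 * ((τ:ℝ) ^ 2) ^ q = C₀ ^ (2 * γ) * R' ^ ((2:ℝ) + 4 * γ) * (D:ℝ) ^ (-(2 * γ)) := by
      rw [h5, h6, ← h7]
      ring
    rw [h8]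
    have hpos' : (0:ℝ) ≤ R' ^ ((2:ℝ) + 4 * γ) * (D:ℝ) ^ (-(2 * γ)) := by positivity
    calc C₀ ^ (2 * γ) * R' ^ ((2:ℝ) + 4 * γ) * (D:ℝ) ^ (-(2 * γ))
        = C₀ ^ (2 * γ) * (R' ^ ((2:ℝ) + 4 * γ) * (D:ℝ) ^ (-(2 * γ))) := by ring
      _ ≤ max C₀ (C₀ ^ (2 * γ)) * (R' ^ ((2:ℝ) + 4 * γ) * (D:ℝ) ^ (-(2 * γ))) :=
          mul_le_mul_of_nonneg_right (le_max_right _ _) hpos'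
      _ = max C₀ (C₀ ^ (2 * γ)) * R' ^ ((2:ℝ) + 4 * γ) * (D:ℝ) ^ (-(2 * γ)) := by ring
end
end
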